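/- arXiv:1511.02334 — 5 statements merged into one kernel-verified Lean document; each statement's English description precedes it below -/
import Mathlib

section
/- For every div point set X of 4 points in the class DPS⁺, X is isomorphic to Conv₄ if and only if X is not isomorphic to Conc₄¹ (Theorem 1). -/
open Finset

/-- A (unit) dividon: an ordered pair of a divider and a set of divs. -/
abbrev Dividon : Type := Finset ℕ × Finset (Finset ℕ)

/-- A candidate (unit) div point set: a pair of a point set and a set of dividons. -/
abbrev PreDPS : Type := Finset ℕ × Finset Dividon

/-- The union `⋃δ` of a set of divs. -/
def unionOf (δ : Finset (Finset ℕ)) : Finset ℕ := δ.sup id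

/-- `ξ(D) = π₁(D) ∪ ⋃π₂(D)`. -/
def xi (D : Dividon) : Finset ℕ := D.1 ∪ unionOf D.2

/-- `D = (d, δ)` is a dividon over the point set `P`. -/
def IsDividon (P : Finset ℕ) (D : Dividon) : Prop :=
  D.1.card = 2 ∧ D.1 ⊆ P ∧
    ∃ A B : Finset ℕ, A ≠ B ∧ D.2 = {A, B} ∧ A ∪ B = P \ D.1 ∧ A ∩ B = ∅

/-- `X` is a div point set. -/
def IsDPS (X : PreDPS) : Prop :=
  X.1.Nonempty ∧ X.2.card = Nat.choose X.1.card 2 ∧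
    (∀ D ∈ X.2, IsDividon X.1 D) ∧
    ∀ D₁ ∈ X.2, ∀ D₂ ∈ X.2, D₁.1 = D₂.1 → D₁ = D₂

/-- `φ(δ,T) = 1` if the two TBD points of `T` lie in the same div of `δ`,
`φ(δ,T) = 0` otherwise. -/
def phi (δ : Finset (Finset ℕ)) (T : Finset ℕ) : ℕ :=
  if ∃ dv ∈ δ, (T ∩ dv).card = 2 then 1 else 0

/-- `ψ(δ) = 1` if some div of `δ` has two elements, `ψ(δ) = 0` otherwise. -/
def psi (δ : Finset (Finset ℕ)) : ℕ :=
  if ∃ dv ∈ δ, dv.card = 2 then 1 else 0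

/-- Laws (L1), (L2), (L3) for div point sets. -/
def LawsDPS (X : PreDPS) : Prop :=
  (∀ R ⊆ X.1, R.card = 4 →
    ∀ D₁ ∈ X.2, ∀ D₂ ∈ X.2, ∀ D₃ ∈ X.2,
      D₁.1 ∪ D₂.1 ∪ D₃.1 = R → (D₁.1 ∩ D₂.1 ∩ D₃.1).card = 1 →
      (phi D₁.2 (R \ D₁.1) = 0 ↔ phi D₂.2 (R \ D₂.1) = phi D₃.2 (R \ D₃.1))) ∧
  (∀ R ⊆ X.1, R.card = 4 →
    ∀ D₁ ∈ X.2, ∀ D₂ ∈ X.2, ∀ D₃ ∈ X.2,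
      D₁.1 ∪ D₂.1 ∪ D₃.1 = R → (D₁.1 ∩ D₂.1 ∩ D₃.1).card = 1 →
      (phi D₁.2 (R \ D₁.1) = 1 ↔ phi D₂.2 (R \ D₂.1) ≠ phi D₃.2 (R \ D₃.1))) ∧
  (∀ R ⊆ X.1, R.card = 4 →
    ∀ D₁ ∈ X.2, ∀ D₂ ∈ X.2, ∀ D₃ ∈ X.2,
      D₁ ≠ D₂ → D₁ ≠ D₃ → D₂ ≠ D₃ →
      D₁.1 ∪ D₂.1 ∪ D₃.1 ⊆ R → (D₁.1 ∪ D₂.1 ∪ D₃.1).card = 3 →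
      phi D₁.2 (R \ D₁.1) = 0 → phi D₂.2 (R \ D₂.1) = 0 →
      phi D₃.2 (R \ D₃.1) = 1)

/-- The class DPS⁺: div point sets satisfying (L1), (L2), (L3). -/
def DPSplus (X : PreDPS) : Prop := IsDPS X ∧ LawsDPS X

/-- `D = (d, δ)` is a unit dividon over the point set `P`. -/
def IsUnitDividon (P : Finset ℕ) (D : Dividon) : Prop :=
  D.1.card = 2 ∧ D.1 ⊆ P ∧
    ∃ A B : Finset ℕ, A ≠ B ∧ D.2 = {A, B} ∧ (A ∪ B).card = 2 ∧
      A ∪ B ⊆ P \ D.1 ∧ A ∩ B = ∅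

/-- `U` is a unit div point set. -/
def IsUDPS (U : PreDPS) : Prop :=
  U.1.Nonempty ∧
    U.2.card = Nat.choose U.1.card 2 * Nat.choose (U.1.card - 2) 2 ∧
    (∀ D ∈ U.2, IsUnitDividon U.1 D) ∧
    ∀ D₁ ∈ U.2, ∀ D₂ ∈ U.2,
      D₁.1 = D₂.1 → unionOf D₁.2 = unionOf D₂.2 → D₁ = D₂

/-- Laws (U1), (U2), (U3) for unit div point sets. -/
def LawsUDPS (U : PreDPS) : Prop :=
  (∀ R ⊆ U.1, R.card = 4 →
    ∀ D₁ ∈ U.2, ∀ D₂ ∈ U.2, ∀ D₃ ∈ U.2,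
      D₁ ≠ D₂ → D₁ ≠ D₃ → D₂ ≠ D₃ →
      xi D₁ = R → xi D₂ = R → xi D₃ = R →
      (D₁.1 ∩ D₂.1 ∩ D₃.1).card = 1 →
      (psi D₁.2 = 0 ↔ psi D₂.2 = psi D₃.2)) ∧
  (∀ R ⊆ U.1, R.card = 4 →
    ∀ D₁ ∈ U.2, ∀ D₂ ∈ U.2, ∀ D₃ ∈ U.2,
      D₁ ≠ D₂ → D₁ ≠ D₃ → D₂ ≠ D₃ →
      xi D₁ = R → xi D₂ = R → xi D₃ = R →
      (D₁.1 ∩ D₂.1 ∩ D₃.1).card = 1 →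
      (psi D₁.2 = 1 ↔ psi D₂.2 ≠ psi D₃.2)) ∧
  (∀ R ⊆ U.1, R.card = 4 →
    ∀ D₁ ∈ U.2, ∀ D₂ ∈ U.2, ∀ D₃ ∈ U.2,
      D₁ ≠ D₂ → D₁ ≠ D₃ → D₂ ≠ D₃ →
      xi D₁ = R → xi D₂ = R → xi D₃ = R →
      (D₁.1 ∪ D₂.1 ∪ D₃.1).card = 3 →
      psi D₁.2 = 0 → psi D₂.2 = 0 → psi D₃.2 = 1)

/-- The class UDPS⁺: unit div point sets satisfying (U1), (U2), (U3). -/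
def UDPSplus (U : PreDPS) : Prop := IsUDPS U ∧ LawsUDPS U

/-- `F_udps`: breaks every dividon of a div point set into unit dividons,
one for each 2-element subset `T = {a,b}` of the TBD points: the unit dividon is
`(d, {{a,b},∅})` if `a` and `b` lie in the same div, and `(d, {{a},{b}})` otherwise. -/
def Fudps (X : PreDPS) : PreDPS :=
  (X.1, X.2.biUnion fun D =>
    ((X.1 \ D.1).powersetCard 2).image fun T =>
      (D.1, if ∃ dv ∈ D.2, T ⊆ dv then ({T, ∅} : Finset (Finset ℕ))
            else T.image fun a => ({a} : Finset ℕ)))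

/-- `Y` is the sub div point set of `X` on the point set `Ps` (where `4 ≤ |Ps|`):
the unique div point set with point set `Ps` whose image under `F_udps` has exactly
the unit dividons `D` of `F_udps X` with `ξ(D) ⊆ Ps`. -/
def IsSdps (X : PreDPS) (Ps : Finset ℕ) (Y : PreDPS) : Prop :=
  Ps ⊆ X.1 ∧ 4 ≤ Ps.card ∧ IsDPS Y ∧ Y.1 = Ps ∧
    (Fudps Y).2 = (Fudps X).2.filter fun D => xi D ⊆ Ps

/-- Isomorphism of (candidate) div point sets. -/
def Isom (X Y : PreDPS) : Prop :=
  ∃ f : ℕ → ℕ, Set.BijOn f ↑X.1 ↑Y.1 ∧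
    ∀ D ∈ X.2, (D.1.image f, D.2.image (Finset.image f)) ∈ Y.2

/-- Isomorphism of sets of (unit) dividons. -/
def OmegaIsom (Ω₁ Ω₂ : Finset Dividon) : Prop :=
  Ω₁.card = Ω₂.card ∧
    ∃ f : ℕ → ℕ, Set.BijOn f ↑(Ω₁.sup xi) ↑(Ω₂.sup xi) ∧
      ∀ D ∈ Ω₁, (D.1.image f, D.2.image (Finset.image f)) ∈ Ω₂

/-- The div point set Conc₄¹. -/
def Conc41 : PreDPS :=
  ({1, 2, 3, 4},
   {({1, 2}, {{3}, {4}}), ({1, 3}, {{2}, {4}}), ({1, 4}, {{2}, {3}}),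
    ({2, 3}, {{1, 4}, ∅}), ({2, 4}, {{1, 3}, ∅}), ({3, 4}, {{1, 2}, ∅})})

/-- The div point set Conv₄. -/
def Conv4 : PreDPS :=
  ({1, 2, 3, 4},
   {({1, 2}, {{3, 4}, ∅}), ({1, 3}, {{2}, {4}}), ({1, 4}, {{2, 3}, ∅}),
    ({2, 3}, {{1, 4}, ∅}), ({2, 4}, {{1}, {3}}), ({3, 4}, {{1, 2}, ∅})})

/-- The div point set Conv_n on `{1, …, n}`: the dividon with divider `d = {i,j}`,
`i < j`, has divs `{p : i < p < j}` and `{p : p < i or p > j}`. -/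
def ConvN (n : ℕ) : PreDPS :=
  (Finset.Icc 1 n,
   ((Finset.Icc 1 n).powersetCard 2).image fun d =>
     (d, ({(Finset.Icc 1 n).filter fun p => (∃ i ∈ d, i < p) ∧ ∃ j ∈ d, p < j,
           (Finset.Icc 1 n).filter fun p =>
             (∀ i ∈ d, p < i) ∨ ∀ i ∈ d, i < p} : Finset (Finset ℕ))))

section Helpers

lemma phi_same {c d : ℕ} (h : c ≠ d) : phi {∅, {c,d}} {c,d} = 1 := by
  unfold phi
  rw [if_pos ⟨{c,d}, by simp, by rw [Finset.inter_self]; exact Finset.card_pair h⟩]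

lemma phi_split {c d : ℕ} (h : c ≠ d) : phi {{c}, {d}} {c,d} = 0 := by
  unfold phi
  rw [if_neg]
  rintro ⟨dv, hdv, hcard⟩
  simp only [Finset.mem_insert, Finset.mem_singleton] at hdv
  rcases hdv with rfl | rfl
  · rw [show ({c,d} : Finset ℕ) ∩ {c} = {c} by ext x; simp] at hcard
    simp at hcard
  · rw [show ({c,d} : Finset ℕ) ∩ {d} = {d} by ext x; simp] at hcard
    simp at hcard

lemma four_elems {s : Finset ℕ} (h : s.card = 4) :
    ∃ a b c d : ℕ, a ≠ b ∧ a ≠ c ∧ a ≠ d ∧ b ≠ c ∧ b ≠ d ∧ c ≠ d ∧ s = {a,b,c,d} := by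
  obtain ⟨a, t, hat, rfl, ht⟩ := Finset.card_eq_succ.mp h
  obtain ⟨b, c, d, hbc, hbd, hcd, rfl⟩ := Finset.card_eq_three.mp ht
  simp only [Finset.mem_insert, Finset.mem_singleton, not_or] at hat
  exact ⟨a, b, c, d, hat.1, hat.2.1, hat.2.2, hbc, hbd, hcd, rfl⟩

lemma pair_sub_quad {a b c d : ℕ} {s : Finset ℕ} (hs : s ⊆ {a,b,c,d}) (h2 : s.card = 2) :
    s = {a,b} ∨ s = {a,c} ∨ s = {a,d} ∨ s = {b,c} ∨ s = {b,d} ∨ s = {c,d} := by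
  obtain ⟨x, y, hxy, rfl⟩ := Finset.card_eq_two.mp h2
  have hx := hs (by simp : x ∈ ({x,y} : Finset ℕ))
  have hy := hs (by simp : y ∈ ({x,y} : Finset ℕ))
  simp only [Finset.mem_insert, Finset.mem_singleton] at hx hy
  rcases hx with rfl|rfl|rfl|rfl <;> rcases hy with rfl|rfl|rfl|rfl <;>
    simp_all [Finset.pair_comm]

lemma delta_form {P : Finset ℕ} {D : Dividon} (hD : IsDividon P D) {c d : ℕ} (hcd : c ≠ d)
    (hPD : P \ D.1 = {c, d}) :
    D.2 = {∅, {c,d}} ∨ D.2 = {{c}, {d}} := by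
  obtain ⟨-, -, A, B, hAB, hδ, hu, hi⟩ := hD
  rw [hPD] at hu
  have hAsub : A ⊆ {c, d} := hu ▸ Finset.subset_union_left
  have hBsub : B ⊆ {c, d} := hu ▸ Finset.subset_union_right
  have key : ∀ x, x ∈ B ↔ x ∈ ({c,d} : Finset ℕ) ∧ x ∉ A := by
    intro x
    constructor
    · intro hx
      refine ⟨hBsub hx, fun hxA => ?_⟩
      have : x ∈ A ∩ B := Finset.mem_inter.mpr ⟨hxA, hx⟩
      simp [hi] at this
    · rintro ⟨hx, hxA⟩
      rcases Finset.mem_union.mp (hu ▸ hx) with h | h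
      · exact absurd h hxA
      · exact h
  by_cases hcA : c ∈ A <;> by_cases hdA : d ∈ A
  · -- A = {c,d}, B = ∅
    have hA : A = {c,d} := Finset.Subset.antisymm hAsub (by
      intro x hx; simp only [Finset.mem_insert, Finset.mem_singleton] at hx
      rcases hx with rfl | rfl <;> assumption)
    have hB : B = ∅ := by
      ext x; simp only [key x, Finset.notMem_empty, iff_false, not_and, hA]
      intro h h2; exact h2 h
    left; rw [hδ, hA, hB, Finset.pair_comm]
  · -- A = {c}, B = {d}
    have hA : A = {c} := by
      ext x
      constructor
      · intro hx
        have := hAsub hx; simp only [Finset.mem_insert, Finset.mem_singleton] at this ⊢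
        rcases this with rfl | rfl; · rfl
        · exact absurd hx hdA
      · intro hx; simp only [Finset.mem_singleton] at hx; subst hx; exact hcA
    have hB : B = {d} := by
      ext x
      rw [key x]
      simp only [Finset.mem_insert, Finset.mem_singleton, hA]
      constructor
      · rintro ⟨rfl | rfl, h⟩; · exact absurd rfl h
        · rfl
      · rintro rfl; exact ⟨Or.inr rfl, fun h => hcd (h.symm)⟩
    right; rw [hδ, hA, hB]
  · -- A = {d}, B = {c}
    have hA : A = {d} := by
      ext x
      constructor
      · intro hx
        have := hAsub hx; simp only [Finset.mem_insert, Finset.mem_singleton] at this ⊢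
        rcases this with rfl | rfl; · exact absurd hx hcA
        · rfl
      · intro hx; simp only [Finset.mem_singleton] at hx; subst hx; exact hdA
    have hB : B = {c} := by
      ext x
      rw [key x]
      simp only [Finset.mem_insert, Finset.mem_singleton, hA]
      constructor
      · rintro ⟨rfl | rfl, h⟩; · rfl
        · exact absurd rfl h
      · rintro rfl; exact ⟨Or.inl rfl, fun h => hcd h⟩
    right; rw [hδ, hA, hB, Finset.pair_comm]
  · -- A = ∅, B = {c,d}
    have hA : A = ∅ := by
      ext x; simp only [Finset.notMem_empty, iff_false]
      intro hx
      have := hAsub hx; simp only [Finset.mem_insert, Finset.mem_singleton] at this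
      rcases this with rfl | rfl <;> [exact hcA hx; exact hdA hx]
    have hB : B = {c,d} := by
      ext x; rw [key x]; simp [hA]
    left; rw [hδ, hA, hB]

end Helpers
lemma dividon_exists {X : PreDPS} (hX : IsDPS X) (h4 : X.1.card = 4) {p : Finset ℕ}
    (hp : p ⊆ X.1) (hp2 : p.card = 2) : ∃ D ∈ X.2, D.1 = p := by
  obtain ⟨-, hcard, hdivs, huniq⟩ := hX
  have hsub : X.2.image Prod.fst ⊆ X.1.powersetCard 2 := by
    intro q hq
    obtain ⟨D, hD, rfl⟩ := Finset.mem_image.mp hq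
    exact Finset.mem_powersetCard.mpr ⟨(hdivs D hD).2.1, (hdivs D hD).1⟩
  have hinj : Set.InjOn Prod.fst ↑X.2 := fun D₁ h1 D₂ h2 h =>
    huniq D₁ (Finset.mem_coe.mp h1) D₂ (Finset.mem_coe.mp h2) h
  have hc : (X.2.image Prod.fst).card = (X.1.powersetCard 2).card := by
    rw [Finset.card_image_of_injOn hinj, Finset.card_powersetCard, hcard, h4]
  have heq : X.2.image Prod.fst = X.1.powersetCard 2 :=
    Finset.eq_of_subset_of_card_le hsub (le_of_eq hc.symm)
  have : p ∈ X.2.image Prod.fst := heq ▸ Finset.mem_powersetCard.mpr ⟨hp, hp2⟩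
  obtain ⟨D, hD, hDp⟩ := Finset.mem_image.mp this
  exact ⟨D, hD, hDp⟩

lemma negConc {X : PreDPS} (h : ∀ t ∈ X.1, ∃ D ∈ X.2, t ∈ D.1 ∧ (∅ : Finset ℕ) ∈ D.2) :
    ¬ Isom X Conc41 := by
  rintro ⟨f, hbij, hdiv⟩
  have h1 : (1:ℕ) ∈ ↑Conc41.1 := by simp [Conc41]
  obtain ⟨t, ht, hft⟩ := hbij.surjOn h1
  obtain ⟨D, hD, htD, hED⟩ := h t (Finset.mem_coe.mp ht)
  have him := hdiv D hD
  have hone : (1:ℕ) ∈ D.1.image f := Finset.mem_image.mpr ⟨t, htD, hft⟩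
  have hemp : (∅ : Finset ℕ) ∈ D.2.image (Finset.image f) :=
    Finset.mem_image.mpr ⟨∅, hED, Finset.image_empty f⟩
  simp only [Conc41, Finset.mem_insert, Finset.mem_singleton, Prod.mk.injEq] at him
  rcases him with ⟨u,v⟩|⟨u,v⟩|⟨u,v⟩|⟨u,v⟩|⟨u,v⟩|⟨u,v⟩ <;>
    first
      | (rw [v] at hemp; revert hemp; decide)
      | (rw [u] at hone; revert hone; decide)

lemma pair_eq_elim {u v p q : ℕ} (h : ({u, v} : Finset ℕ) = {p, q}) :
    (u = p ∨ u = q) ∧ (v = p ∨ v = q) := by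
  constructor
  · have := Finset.ext_iff.mp h u; simp at this; tauto
  · have := Finset.ext_iff.mp h v; simp at this; tauto

lemma negConv {X : PreDPS} {a b c : ℕ} (ha : a ∈ X.1) (hb : b ∈ X.1) (hc : c ∈ X.1)
    (hab : a ≠ b) (hac : a ≠ c) (hbc : b ≠ c) {D1 D2 : Dividon}
    (h1 : D1 ∈ X.2) (h2 : D2 ∈ X.2) (hd1 : D1.1 = {a,b}) (hd2 : D2.1 = {a,c})
    (he1 : (∅ : Finset ℕ) ∉ D1.2) (he2 : (∅ : Finset ℕ) ∉ D2.2) : ¬ Isom X Conv4 := by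
  rintro ⟨f, hbij, hdiv⟩
  have hinj := hbij.injOn
  have hfab : f a ≠ f b := fun h => hab (hinj (Finset.mem_coe.mpr ha) (Finset.mem_coe.mpr hb) h)
  have hfac : f a ≠ f c := fun h => hac (hinj (Finset.mem_coe.mpr ha) (Finset.mem_coe.mpr hc) h)
  have hfbc : f b ≠ f c := fun h => hbc (hinj (Finset.mem_coe.mpr hb) (Finset.mem_coe.mpr hc) h)
  have him1 := hdiv D1 h1
  have him2 := hdiv D2 h2
  have hne1 : (∅ : Finset ℕ) ∉ D1.2.image (Finset.image f) := by
    simp only [Finset.mem_image, not_exists]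
    rintro s ⟨hs, hsf⟩
    rw [Finset.image_eq_empty] at hsf; subst hsf; exact he1 hs
  have hne2 : (∅ : Finset ℕ) ∉ D2.2.image (Finset.image f) := by
    simp only [Finset.mem_image, not_exists]
    rintro s ⟨hs, hsf⟩
    rw [Finset.image_eq_empty] at hsf; subst hsf; exact he2 hs
  have ie1 : D1.1.image f = {f a, f b} := by rw [hd1]; simp
  have ie2 : D2.1.image f = {f a, f c} := by rw [hd2]; simp
  simp only [Conv4, Finset.mem_insert, Finset.mem_singleton, Prod.mk.injEq] at him1 him2
  have k1 : ({f a, f b} : Finset ℕ) = {1,3} ∨ ({f a, f b} : Finset ℕ) = {2,4} := by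
    rw [← ie1]
    rcases him1 with ⟨u,v⟩|⟨u,v⟩|⟨u,v⟩|⟨u,v⟩|⟨u,v⟩|⟨u,v⟩ <;>
      first
        | (exact Or.inl u)
        | (exact Or.inr u)
        | (exfalso; rw [v] at hne1; revert hne1; decide)
  have k2 : ({f a, f c} : Finset ℕ) = {1,3} ∨ ({f a, f c} : Finset ℕ) = {2,4} := by
    rw [← ie2]
    rcases him2 with ⟨u,v⟩|⟨u,v⟩|⟨u,v⟩|⟨u,v⟩|⟨u,v⟩|⟨u,v⟩ <;>
      first
        | (exact Or.inl u)
        | (exact Or.inr u)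
        | (exfalso; rw [v] at hne2; revert hne2; decide)
  rcases k1 with k1 | k1 <;> rcases k2 with k2 | k2 <;>
    [skip; skip; skip; skip] <;>
    · have e1 := pair_eq_elim k1
      have e2 := pair_eq_elim k2
      omega
lemma posConv {X : PreDPS} {w x y z : ℕ}
    (hwx : w ≠ x) (hwy : w ≠ y) (hwz : w ≠ z) (hxy : x ≠ y) (hxz : x ≠ z) (hyz : y ≠ z)
    (hP : X.1 = {w,x,y,z})
    {E1 E2 E3 E4 E5 E6 : Dividon}
    (henum : ∀ D ∈ X.2, D = E1 ∨ D = E2 ∨ D = E3 ∨ D = E4 ∨ D = E5 ∨ D = E6)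
    (f1 : E1.1 = {w,x}) (g1 : E1.2 = {∅, {y,z}})
    (f2 : E2.1 = {x,y}) (g2 : E2.2 = {∅, {w,z}})
    (f3 : E3.1 = {y,z}) (g3 : E3.2 = {∅, {w,x}})
    (f4 : E4.1 = {w,z}) (g4 : E4.2 = {∅, {x,y}})
    (f5 : E5.1 = {w,y}) (g5 : E5.2 = {{x}, {z}})
    (f6 : E6.1 = {x,z}) (g6 : E6.2 = {{w}, {y}}) : Isom X Conv4 := by
  classical
  set f : ℕ → ℕ := fun t => if t = w then 1 else if t = x then 2 else if t = y then 3 else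
    if t = z then 4 else 0 with hf
  have fw : f w = 1 := by simp [hf]
  have fx : f x = 2 := by simp [hf, hwx.symm]
  have fy : f y = 3 := by simp [hf, hwy.symm, hxy.symm]
  have fz : f z = 4 := by simp [hf, hwz.symm, hxz.symm, hyz.symm]
  refine ⟨f, ⟨?_, ?_, ?_⟩, ?_⟩
  · intro t ht
    simp only [hP, Finset.coe_insert, Set.mem_insert_iff, Finset.coe_singleton,
      Set.mem_singleton_iff] at ht
    rcases ht with rfl | rfl | rfl | rfl <;>
      simp [Conv4, fw, fx, fy, fz]
  · intro s hs t ht h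
    simp only [hP, Finset.coe_insert, Set.mem_insert_iff, Finset.coe_singleton,
      Set.mem_singleton_iff] at hs ht
    rcases hs with rfl | rfl | rfl | rfl <;> rcases ht with rfl | rfl | rfl | rfl <;>
      simp only [fw, fx, fy, fz] at h <;> omega
  · intro v hv
    simp only [Conv4, Finset.coe_insert, Set.mem_insert_iff, Finset.coe_singleton,
      Set.mem_singleton_iff] at hv
    rcases hv with rfl | rfl | rfl | rfl
    · exact ⟨w, by simp [hP], fw⟩
    · exact ⟨x, by simp [hP], fx⟩
    · exact ⟨y, by simp [hP], fy⟩
    · exact ⟨z, by simp [hP], fz⟩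
  · intro D hD
    rcases henum D hD with rfl | rfl | rfl | rfl | rfl | rfl <;>
      [rw [f1, g1]; rw [f2, g2]; rw [f3, g3]; rw [f4, g4]; rw [f5, g5]; rw [f6, g6]] <;>
      simp only [Finset.image_insert, Finset.image_singleton, Finset.image_empty,
        fw, fx, fy, fz] <;> decide

lemma posConc {X : PreDPS} {w x y z : ℕ}
    (hwx : w ≠ x) (hwy : w ≠ y) (hwz : w ≠ z) (hxy : x ≠ y) (hxz : x ≠ z) (hyz : y ≠ z)
    (hP : X.1 = {w,x,y,z})
    {E1 E2 E3 E4 E5 E6 : Dividon}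
    (henum : ∀ D ∈ X.2, D = E1 ∨ D = E2 ∨ D = E3 ∨ D = E4 ∨ D = E5 ∨ D = E6)
    (f1 : E1.1 = {w,x}) (g1 : E1.2 = {{y}, {z}})
    (f2 : E2.1 = {w,y}) (g2 : E2.2 = {{x}, {z}})
    (f3 : E3.1 = {w,z}) (g3 : E3.2 = {{x}, {y}})
    (f4 : E4.1 = {x,y}) (g4 : E4.2 = {∅, {w,z}})
    (f5 : E5.1 = {x,z}) (g5 : E5.2 = {∅, {w,y}})
    (f6 : E6.1 = {y,z}) (g6 : E6.2 = {∅, {w,x}}) : Isom X Conc41 := by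
  classical
  set f : ℕ → ℕ := fun t => if t = w then 1 else if t = x then 2 else if t = y then 3 else
    if t = z then 4 else 0 with hf
  have fw : f w = 1 := by simp [hf]
  have fx : f x = 2 := by simp [hf, hwx.symm]
  have fy : f y = 3 := by simp [hf, hwy.symm, hxy.symm]
  have fz : f z = 4 := by simp [hf, hwz.symm, hxz.symm, hyz.symm]
  refine ⟨f, ⟨?_, ?_, ?_⟩, ?_⟩
  · intro t ht
    simp only [hP, Finset.coe_insert, Set.mem_insert_iff, Finset.coe_singleton,
      Set.mem_singleton_iff] at ht
    rcases ht with rfl | rfl | rfl | rfl <;>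
      simp [Conc41, fw, fx, fy, fz]
  · intro s hs t ht h
    simp only [hP, Finset.coe_insert, Set.mem_insert_iff, Finset.coe_singleton,
      Set.mem_singleton_iff] at hs ht
    rcases hs with rfl | rfl | rfl | rfl <;> rcases ht with rfl | rfl | rfl | rfl <;>
      simp only [fw, fx, fy, fz] at h <;> omega
  · intro v hv
    simp only [Conc41, Finset.coe_insert, Set.mem_insert_iff, Finset.coe_singleton,
      Set.mem_singleton_iff] at hv
    rcases hv with rfl | rfl | rfl | rfl
    · exact ⟨w, by simp [hP], fw⟩
    · exact ⟨x, by simp [hP], fx⟩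
    · exact ⟨y, by simp [hP], fy⟩
    · exact ⟨z, by simp [hP], fz⟩
  · intro D hD
    rcases henum D hD with rfl | rfl | rfl | rfl | rfl | rfl <;>
      [rw [f1, g1]; rw [f2, g2]; rw [f3, g3]; rw [f4, g4]; rw [f5, g5]; rw [f6, g6]] <;>
      simp only [Finset.image_insert, Finset.image_singleton, Finset.image_empty,
        fw, fx, fy, fz] <;> decide
set_option maxHeartbeats 4000000 in
lemma main_classify {X : PreDPS} (hX : DPSplus X) (h4 : X.1.card = 4) :
    (Isom X Conv4 ∧ ¬ Isom X Conc41) ∨ (Isom X Conc41 ∧ ¬ Isom X Conv4) := by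
  obtain ⟨hDPS, hL1, hL2, hL3⟩ := hX
  obtain ⟨a, b, c, d, hab, hac, had, hbc, hbd, hcd, hP⟩ := four_elems h4
  have hdivs := hDPS.2.2.1
  have huniq := hDPS.2.2.2
  have haP : a ∈ X.1 := by rw [hP]; simp
  have hbP : b ∈ X.1 := by rw [hP]; simp
  have hcP : c ∈ X.1 := by rw [hP]; simp
  have hdP : d ∈ X.1 := by rw [hP]; simp
  obtain ⟨Dab, hDab, dab⟩ := dividon_exists hDPS h4
    (show ({a,b} : Finset ℕ) ⊆ X.1 by rw [hP]; intro t ht; simp at ht ⊢; try tauto)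
    (Finset.card_pair hab)
  obtain ⟨Dac, hDac, dac⟩ := dividon_exists hDPS h4
    (show ({a,c} : Finset ℕ) ⊆ X.1 by rw [hP]; intro t ht; simp at ht ⊢; try tauto)
    (Finset.card_pair hac)
  obtain ⟨Dad, hDad, dad⟩ := dividon_exists hDPS h4
    (show ({a,d} : Finset ℕ) ⊆ X.1 by rw [hP]; intro t ht; simp at ht ⊢; try tauto)
    (Finset.card_pair had)
  obtain ⟨Dbc, hDbc, dbc⟩ := dividon_exists hDPS h4
    (show ({b,c} : Finset ℕ) ⊆ X.1 by rw [hP]; intro t ht; simp at ht ⊢; try tauto)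
    (Finset.card_pair hbc)
  obtain ⟨Dbd, hDbd, dbd⟩ := dividon_exists hDPS h4
    (show ({b,d} : Finset ℕ) ⊆ X.1 by rw [hP]; intro t ht; simp at ht ⊢; try tauto)
    (Finset.card_pair hbd)
  obtain ⟨Dcd, hDcd, dcd⟩ := dividon_exists hDPS h4
    (show ({c,d} : Finset ℕ) ⊆ X.1 by rw [hP]; intro t ht; simp at ht ⊢; try tauto)
    (Finset.card_pair hcd)
  have sdab : X.1 \ Dab.1 = {c,d} := by rw [hP, dab]; ext t; simp; try omega
  have sdac : X.1 \ Dac.1 = {b,d} := by rw [hP, dac]; ext t; simp; try omega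
  have sdad : X.1 \ Dad.1 = {b,c} := by rw [hP, dad]; ext t; simp; try omega
  have sdbc : X.1 \ Dbc.1 = {a,d} := by rw [hP, dbc]; ext t; simp; try omega
  have sdbd : X.1 \ Dbd.1 = {a,c} := by rw [hP, dbd]; ext t; simp; try omega
  have sdcd : X.1 \ Dcd.1 = {a,b} := by rw [hP, dcd]; ext t; simp; try omega
  have δab := delta_form (hdivs Dab hDab) hcd sdab
  have δac := delta_form (hdivs Dac hDac) hbd sdac
  have δad := delta_form (hdivs Dad hDad) hbc sdad
  have δbc := delta_form (hdivs Dbc hDbc) had sdbc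
  have δbd := delta_form (hdivs Dbd hDbd) hac sdbd
  have δcd := delta_form (hdivs Dcd hDcd) hab sdcd
  have henum : ∀ D ∈ X.2, D = Dab ∨ D = Dac ∨ D = Dad ∨ D = Dbc ∨ D = Dbd ∨ D = Dcd := by
    intro D hD
    rcases pair_sub_quad (hP ▸ (hdivs D hD).2.1) (hdivs D hD).1 with h|h|h|h|h|h
    · exact Or.inl (huniq D hD Dab hDab (h.trans dab.symm))
    · exact Or.inr (Or.inl (huniq D hD Dac hDac (h.trans dac.symm)))
    · exact Or.inr (Or.inr (Or.inl (huniq D hD Dad hDad (h.trans dad.symm))))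
    · exact Or.inr (Or.inr (Or.inr (Or.inl (huniq D hD Dbc hDbc (h.trans dbc.symm)))))
    · exact Or.inr (Or.inr (Or.inr (Or.inr (Or.inl (huniq D hD Dbd hDbd (h.trans dbd.symm))))))
    · exact Or.inr (Or.inr (Or.inr (Or.inr (Or.inr (huniq D hD Dcd hDcd (h.trans dcd.symm))))))
  -- law instances
  have LA := hL1 X.1 (Finset.Subset.refl _) h4 Dab hDab Dac hDac Dad hDad
    (by rw [dab, dac, dad, hP]; ext t; simp; try omega)
    (by rw [dab, dac, dad,
        show ({a,b} ∩ {a,c} ∩ {a,d} : Finset ℕ) = {a} from by ext t; simp; try omega]; simp)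
  have LB := hL1 X.1 (Finset.Subset.refl _) h4 Dab hDab Dbc hDbc Dbd hDbd
    (by rw [dab, dbc, dbd, hP]; ext t; simp; try omega)
    (by rw [dab, dbc, dbd,
        show ({a,b} ∩ {b,c} ∩ {b,d} : Finset ℕ) = {b} from by ext t; simp; try omega]; simp)
  have LC := hL1 X.1 (Finset.Subset.refl _) h4 Dac hDac Dbc hDbc Dcd hDcd
    (by rw [dac, dbc, dcd, hP]; ext t; simp; try omega)
    (by rw [dac, dbc, dcd,
        show ({a,c} ∩ {b,c} ∩ {c,d} : Finset ℕ) = {c} from by ext t; simp; try omega]; simp)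
  have LD := hL1 X.1 (Finset.Subset.refl _) h4 Dad hDad Dbd hDbd Dcd hDcd
    (by rw [dad, dbd, dcd, hP]; ext t; simp; try omega)
    (by rw [dad, dbd, dcd,
        show ({a,d} ∩ {b,d} ∩ {c,d} : Finset ℕ) = {d} from by ext t; simp; try omega]; simp)
  have dne : ∀ D E : Dividon, D.1 ≠ E.1 → D ≠ E := fun D E h h' => h (by rw [h'])
  have LT := hL3 X.1 (Finset.Subset.refl _) h4 Dab hDab Dac hDac Dbc hDbc
    (dne _ _ (by rw [dab, dac]; intro h; have := Finset.ext_iff.mp h b; simp at this; omega))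
    (dne _ _ (by rw [dab, dbc]; intro h; have := Finset.ext_iff.mp h a; simp at this; omega))
    (dne _ _ (by rw [dac, dbc]; intro h; have := Finset.ext_iff.mp h a; simp at this; omega))
    (by rw [dab, dac, dbc, hP]; intro t ht; simp at ht ⊢; try omega)
    (by rw [dab, dac, dbc,
        show ({a,b} ∪ {a,c} ∪ {b,c} : Finset ℕ) = {a,b,c} from by ext t; simp; try omega,
        Finset.card_insert_of_notMem (by simp; omega),
        Finset.card_insert_of_notMem (by simp; omega), Finset.card_singleton])
  rw [sdab, sdac, sdad] at LA
  rw [sdab, sdbc, sdbd] at LB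
  rw [sdac, sdbc, sdcd] at LC
  rw [sdad, sdbd, sdcd] at LD
  rw [sdab, sdac, sdbc] at LT
  clear hL1 hL2 hL3 hdivs huniq hDPS h4 dne
  rcases δab with hab1 | hab1 <;> rcases δac with hac1 | hac1 <;>
    rcases δad with had1 | had1 <;> rcases δbc with hbc1 | hbc1 <;>
    rcases δbd with hbd1 | hbd1 <;> rcases δcd with hcd1 | hcd1 <;>
    simp only [hab1, hac1, had1, hbc1, hbd1, hcd1] at LA LB LC LD LT <;>
    simp only [phi_same hab, phi_same hac, phi_same had, phi_same hbc, phi_same hbd,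
      phi_same hcd, phi_split hab, phi_split hac, phi_split had, phi_split hbc,
      phi_split hbd, phi_split hcd] at LA LB LC LD LT <;>
    first
    | (apply absurd LA; simp; done)
    | (apply absurd LB; simp; done)
    | (apply absurd LC; simp; done)
    | (apply absurd LD; simp; done)
    | (apply absurd LT; simp; done)
    | -- T_a : apex a
      (have q1 : Dab.2 = {{c}, {d}} := hab1
       have q2 : Dac.2 = {{b}, {d}} := hac1
       have q3 : Dad.2 = {{b}, {c}} := had1
       have q4 : Dbc.2 = {∅, {a, d}} := hbc1
       have q5 : Dbd.2 = {∅, {a, c}} := hbd1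
       have q6 : Dcd.2 = {∅, {a, b}} := hcd1
       have n1 : (∅ : Finset ℕ) ∉ Dab.2 := by
         rw [q1]; intro hh; simp only [Finset.mem_insert, Finset.mem_singleton] at hh
         rcases hh with hh | hh <;> exact Finset.singleton_ne_empty _ hh.symm
       have n2 : (∅ : Finset ℕ) ∉ Dac.2 := by
         rw [q2]; intro hh; simp only [Finset.mem_insert, Finset.mem_singleton] at hh
         rcases hh with hh | hh <;> exact Finset.singleton_ne_empty _ hh.symm
       exact Or.inr ⟨posConc hab hac had hbc hbd hcd hP henum
         dab q1 dac q2 dad q3 dbc q4 dbd q5 dcd q6,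
         negConv haP hbP hcP hab hac hbc hDab hDac dab dac n1 n2⟩)
    | -- T_b : apex b
      (have q1 : Dab.2 = {{c}, {d}} := hab1
       have q2 : Dac.2 = {∅, {b, d}} := hac1
       have q3 : Dad.2 = {∅, {b, c}} := had1
       have q4 : Dbc.2 = {{a}, {d}} := hbc1
       have q5 : Dbd.2 = {{a}, {c}} := hbd1
       have q6 : Dcd.2 = {∅, {a, b}} := hcd1
       have r1 : Dab.1 = {b, a} := by rw [dab]; exact Finset.pair_comm a b
       have r6 : Dcd.2 = {∅, {b, a}} := by rw [q6, Finset.pair_comm a b]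
       have hP' : X.1 = {b, a, c, d} := by rw [hP]; ext t; simp; try tauto
       have he : ∀ D ∈ X.2, D = Dab ∨ D = Dbc ∨ D = Dbd ∨ D = Dac ∨ D = Dad ∨ D = Dcd :=
         fun D hD => by rcases henum D hD with h|h|h|h|h|h <;> tauto
       have n1 : (∅ : Finset ℕ) ∉ Dab.2 := by
         rw [q1]; intro hh; simp only [Finset.mem_insert, Finset.mem_singleton] at hh
         rcases hh with hh | hh <;> exact Finset.singleton_ne_empty _ hh.symm
       have n2 : (∅ : Finset ℕ) ∉ Dbc.2 := by
         rw [q4]; intro hh; simp only [Finset.mem_insert, Finset.mem_singleton] at hh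
         rcases hh with hh | hh <;> exact Finset.singleton_ne_empty _ hh.symm
       exact Or.inr ⟨posConc hab.symm hbc hbd hac had hcd hP' he
         r1 q1 dbc q4 dbd q5 dac q2 dad q3 dcd r6,
         negConv hbP haP hcP hab.symm hbc hac hDab hDbc r1 dbc n1 n2⟩)
    | -- T_c : apex c
      (have q1 : Dab.2 = {∅, {c, d}} := hab1
       have q2 : Dac.2 = {{b}, {d}} := hac1
       have q3 : Dad.2 = {∅, {b, c}} := had1
       have q4 : Dbc.2 = {{a}, {d}} := hbc1
       have q5 : Dbd.2 = {∅, {a, c}} := hbd1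
       have q6 : Dcd.2 = {{a}, {b}} := hcd1
       have r2 : Dac.1 = {c, a} := by rw [dac]; exact Finset.pair_comm a c
       have r4 : Dbc.1 = {c, b} := by rw [dbc]; exact Finset.pair_comm b c
       have r3 : Dad.2 = {∅, {c, b}} := by rw [q3, Finset.pair_comm b c]
       have r5 : Dbd.2 = {∅, {c, a}} := by rw [q5, Finset.pair_comm a c]
       have hP' : X.1 = {c, a, b, d} := by rw [hP]; ext t; simp; try tauto
       have he : ∀ D ∈ X.2, D = Dac ∨ D = Dbc ∨ D = Dcd ∨ D = Dab ∨ D = Dad ∨ D = Dbd :=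
         fun D hD => by rcases henum D hD with h|h|h|h|h|h <;> tauto
       have n1 : (∅ : Finset ℕ) ∉ Dac.2 := by
         rw [q2]; intro hh; simp only [Finset.mem_insert, Finset.mem_singleton] at hh
         rcases hh with hh | hh <;> exact Finset.singleton_ne_empty _ hh.symm
       have n2 : (∅ : Finset ℕ) ∉ Dbc.2 := by
         rw [q4]; intro hh; simp only [Finset.mem_insert, Finset.mem_singleton] at hh
         rcases hh with hh | hh <;> exact Finset.singleton_ne_empty _ hh.symm
       exact Or.inr ⟨posConc hac.symm hbc.symm hcd hab had hbd hP' he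
         r2 q2 r4 q4 dcd q6 dab q1 dad r3 dbd r5,
         negConv hcP haP hbP hac.symm hbc.symm hab hDac hDbc r2 r4 n1 n2⟩)
    | -- T_d : apex d
      (have q1 : Dab.2 = {∅, {c, d}} := hab1
       have q2 : Dac.2 = {∅, {b, d}} := hac1
       have q3 : Dad.2 = {{b}, {c}} := had1
       have q4 : Dbc.2 = {∅, {a, d}} := hbc1
       have q5 : Dbd.2 = {{a}, {c}} := hbd1
       have q6 : Dcd.2 = {{a}, {b}} := hcd1
       have r3 : Dad.1 = {d, a} := by rw [dad]; exact Finset.pair_comm a d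
       have r5 : Dbd.1 = {d, b} := by rw [dbd]; exact Finset.pair_comm b d
       have r6 : Dcd.1 = {d, c} := by rw [dcd]; exact Finset.pair_comm c d
       have s1 : Dab.2 = {∅, {d, c}} := by rw [q1, Finset.pair_comm c d]
       have s2 : Dac.2 = {∅, {d, b}} := by rw [q2, Finset.pair_comm b d]
       have s4 : Dbc.2 = {∅, {d, a}} := by rw [q4, Finset.pair_comm a d]
       have hP' : X.1 = {d, a, b, c} := by rw [hP]; ext t; simp; try tauto
       have he : ∀ D ∈ X.2, D = Dad ∨ D = Dbd ∨ D = Dcd ∨ D = Dab ∨ D = Dac ∨ D = Dbc :=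
         fun D hD => by rcases henum D hD with h|h|h|h|h|h <;> tauto
       have n1 : (∅ : Finset ℕ) ∉ Dad.2 := by
         rw [q3]; intro hh; simp only [Finset.mem_insert, Finset.mem_singleton] at hh
         rcases hh with hh | hh <;> exact Finset.singleton_ne_empty _ hh.symm
       have n2 : (∅ : Finset ℕ) ∉ Dbd.2 := by
         rw [q5]; intro hh; simp only [Finset.mem_insert, Finset.mem_singleton] at hh
         rcases hh with hh | hh <;> exact Finset.singleton_ne_empty _ hh.symm
       exact Or.inr ⟨posConc had.symm hbd.symm hcd.symm hab hac hbc hP' he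
         r3 q3 r5 q5 r6 q6 dab s1 dac s2 dbc s4,
         negConv hdP haP hbP had.symm hbd.symm hab hDad hDbd r3 r5 n1 n2⟩)
    | -- C1 : cycle a-b-c-d
      (have q1 : Dab.2 = {∅, {c, d}} := hab1
       have q2 : Dac.2 = {{b}, {d}} := hac1
       have q3 : Dad.2 = {∅, {b, c}} := had1
       have q4 : Dbc.2 = {∅, {a, d}} := hbc1
       have q5 : Dbd.2 = {{a}, {c}} := hbd1
       have q6 : Dcd.2 = {∅, {a, b}} := hcd1
       have he : ∀ D ∈ X.2, D = Dab ∨ D = Dbc ∨ D = Dcd ∨ D = Dad ∨ D = Dac ∨ D = Dbd :=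
         fun D hD => by rcases henum D hD with h|h|h|h|h|h <;> tauto
       have hcov : ∀ t ∈ X.1, ∃ D ∈ X.2, t ∈ D.1 ∧ (∅ : Finset ℕ) ∈ D.2 := by
         intro t ht
         rw [hP] at ht; simp only [Finset.mem_insert, Finset.mem_singleton] at ht
         rcases ht with rfl | rfl | rfl | rfl
         · exact ⟨Dab, hDab, by rw [dab]; simp, by rw [q1]; simp⟩
         · exact ⟨Dab, hDab, by rw [dab]; simp, by rw [q1]; simp⟩
         · exact ⟨Dcd, hDcd, by rw [dcd]; simp, by rw [q6]; simp⟩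
         · exact ⟨Dcd, hDcd, by rw [dcd]; simp, by rw [q6]; simp⟩
       exact Or.inl ⟨posConv hab hac had hbc hbd hcd hP he
         dab q1 dbc q4 dcd q6 dad q3 dac q2 dbd q5, negConc hcov⟩)
    | -- C2 : cycle b-a-c-d
      (have q1 : Dab.2 = {∅, {c, d}} := hab1
       have q2 : Dac.2 = {∅, {b, d}} := hac1
       have q3 : Dad.2 = {{b}, {c}} := had1
       have q4 : Dbc.2 = {{a}, {d}} := hbc1
       have q5 : Dbd.2 = {∅, {a, c}} := hbd1
       have q6 : Dcd.2 = {∅, {a, b}} := hcd1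
       have r1 : Dab.1 = {b, a} := by rw [dab]; exact Finset.pair_comm a b
       have r6 : Dcd.2 = {∅, {b, a}} := by rw [q6, Finset.pair_comm a b]
       have hP' : X.1 = {b, a, c, d} := by rw [hP]; ext t; simp; try tauto
       have he : ∀ D ∈ X.2, D = Dab ∨ D = Dac ∨ D = Dcd ∨ D = Dbd ∨ D = Dbc ∨ D = Dad :=
         fun D hD => by rcases henum D hD with h|h|h|h|h|h <;> tauto
       have hcov : ∀ t ∈ X.1, ∃ D ∈ X.2, t ∈ D.1 ∧ (∅ : Finset ℕ) ∈ D.2 := by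
         intro t ht
         rw [hP] at ht; simp only [Finset.mem_insert, Finset.mem_singleton] at ht
         rcases ht with rfl | rfl | rfl | rfl
         · exact ⟨Dab, hDab, by rw [dab]; simp, by rw [q1]; simp⟩
         · exact ⟨Dab, hDab, by rw [dab]; simp, by rw [q1]; simp⟩
         · exact ⟨Dac, hDac, by rw [dac]; simp, by rw [q2]; simp⟩
         · exact ⟨Dbd, hDbd, by rw [dbd]; simp, by rw [q5]; simp⟩
       exact Or.inl ⟨posConv hab.symm hbc hbd hac had hcd hP' he
         r1 q1 dac q2 dcd r6 dbd q5 dbc q4 dad q3, negConc hcov⟩)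
    | -- C3 : cycle a-c-b-d
      (have q1 : Dab.2 = {{c}, {d}} := hab1
       have q2 : Dac.2 = {∅, {b, d}} := hac1
       have q3 : Dad.2 = {∅, {b, c}} := had1
       have q4 : Dbc.2 = {∅, {a, d}} := hbc1
       have q5 : Dbd.2 = {∅, {a, c}} := hbd1
       have q6 : Dcd.2 = {{a}, {b}} := hcd1
       have r4 : Dbc.1 = {c, b} := by rw [dbc]; exact Finset.pair_comm b c
       have r3 : Dad.2 = {∅, {c, b}} := by rw [q3, Finset.pair_comm b c]
       have hP' : X.1 = {a, c, b, d} := by rw [hP]; ext t; simp; try tauto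
       have he : ∀ D ∈ X.2, D = Dac ∨ D = Dbc ∨ D = Dbd ∨ D = Dad ∨ D = Dab ∨ D = Dcd :=
         fun D hD => by rcases henum D hD with h|h|h|h|h|h <;> tauto
       have hcov : ∀ t ∈ X.1, ∃ D ∈ X.2, t ∈ D.1 ∧ (∅ : Finset ℕ) ∈ D.2 := by
         intro t ht
         rw [hP] at ht; simp only [Finset.mem_insert, Finset.mem_singleton] at ht
         rcases ht with rfl | rfl | rfl | rfl
         · exact ⟨Dac, hDac, by rw [dac]; simp, by rw [q2]; simp⟩
         · exact ⟨Dbc, hDbc, by rw [dbc]; simp, by rw [q4]; simp⟩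
         · exact ⟨Dac, hDac, by rw [dac]; simp, by rw [q2]; simp⟩
         · exact ⟨Dad, hDad, by rw [dad]; simp, by rw [q3]; simp⟩
       exact Or.inl ⟨posConv hac hab had hbc.symm hcd hbd hP' he
         dac q2 r4 q4 dbd q5 dad r3 dab q1 dcd q6, negConc hcov⟩)

/-- Theorem 1: every div point set of 4 points in DPS⁺ is isomorphic to Conv₄
iff it is not isomorphic to Conc₄¹. -/
theorem stmt_0 (X : PreDPS) (hX : DPSplus X) (h4 : X.1.card = 4) :
    Isom X Conv4 ↔ ¬ Isom X Conc41 := by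
  rcases main_classify hX h4 with ⟨h1, h2⟩ | ⟨h1, h2⟩
  · exact ⟨fun _ => h2, fun _ => h1⟩
  · exact ⟨fun hv => (h2 hv).elim, fun hn => (hn h1).elim⟩
end

section
/- For every div point set X of 5 points in the class DPS⁺, the number of sub div point sets of 4 points of X that are isomorphic to Conc₄¹ is exactly 0, 2, or 4, and every remaining sub div point set of 4 points of X is isomorphic to Conv₄ (Theorem 2). -/
open Finset

/-! ### Auxiliary development -/

open scoped Classical

section Aux

/-- `sbit X d T`: some dividon of `X` with divider `d` has a div containing `T`. -/
def sbit (X : PreDPS) (d T : Finset ℕ) : Prop :=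
  ∃ D ∈ X.2, D.1 = d ∧ ∃ dv ∈ D.2, T ⊆ dv

lemma unionOf_pair_empty (T : Finset ℕ) : unionOf {T, ∅} = T := by
  simp [unionOf]

lemma unionOf_image_singleton (T : Finset ℕ) :
    unionOf (T.image fun a => ({a} : Finset ℕ)) = T := by
  ext x; simp [unionOf, Finset.mem_sup]

lemma pair_split_ne (T : Finset ℕ) (hT : T.card = 2) :
    ({T, ∅} : Finset (Finset ℕ)) ≠ T.image fun a => ({a} : Finset ℕ) := by
  intro h
  have h1 : (∅ : Finset ℕ) ∈ ({T, ∅} : Finset (Finset ℕ)) := by simp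
  rw [h] at h1
  simp only [Finset.mem_image] at h1
  obtain ⟨a, _, ha⟩ := h1
  exact absurd ha (by simp)

lemma phi_eq_one_iff {δ : Finset (Finset ℕ)} {T : Finset ℕ} (hT : T.card = 2) :
    phi δ T = 1 ↔ ∃ dv ∈ δ, T ⊆ dv := by
  have key : (∃ dv ∈ δ, (T ∩ dv).card = 2) ↔ ∃ dv ∈ δ, T ⊆ dv := by
    constructor
    · rintro ⟨dv, hdv, hc⟩
      refine ⟨dv, hdv, ?_⟩
      have hsub : T ∩ dv ⊆ T := Finset.inter_subset_left
      have : T ∩ dv = T := Finset.eq_of_subset_of_card_le hsub (by omega)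
      rw [← Finset.inter_eq_left]; exact this
    · rintro ⟨dv, hdv, hc⟩
      exact ⟨dv, hdv, by rw [Finset.inter_eq_left.2 hc]; exact hT⟩
  unfold phi
  split <;> rename_i h
  · simp [key.mp h]
  · simp only [key] at h; simp [h]

lemma phi_zero_or_one (δ : Finset (Finset ℕ)) (T : Finset ℕ) :
    phi δ T = 0 ∨ phi δ T = 1 := by unfold phi; split <;> simp

lemma phi_eq_zero_iff {δ : Finset (Finset ℕ)} {T : Finset ℕ} (hT : T.card = 2) :
    phi δ T = 0 ↔ ¬ ∃ dv ∈ δ, T ⊆ dv := by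
  rw [← phi_eq_one_iff hT]
  rcases phi_zero_or_one δ T with h | h <;> simp [h]

/-- In a div point set, every 2-subset of the point set is the divider of a
(unique) dividon. -/
lemma exists_dividon {X : PreDPS} (hX : IsDPS X) {d : Finset ℕ}
    (hd : d ⊆ X.1) (hd2 : d.card = 2) : ∃ D ∈ X.2, D.1 = d := by
  obtain ⟨hne, hcard, hval, huniq⟩ := hX
  have himg : X.2.image Prod.fst ⊆ X.1.powersetCard 2 := by
    intro s hs
    simp only [Finset.mem_image] at hs
    obtain ⟨D, hD, rfl⟩ := hs
    exact Finset.mem_powersetCard.2 ⟨(hval D hD).2.1, (hval D hD).1⟩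
  have hinj : Set.InjOn Prod.fst ↑X.2 := fun D₁ h1 D₂ h2 h =>
    huniq D₁ h1 D₂ h2 h
  have hcard2 : (X.2.image Prod.fst).card = (X.1.powersetCard 2).card := by
    rw [Finset.card_image_of_injOn hinj, hcard, Finset.card_powersetCard]
  have heq : X.2.image Prod.fst = X.1.powersetCard 2 :=
    Finset.eq_of_subset_of_card_le himg (le_of_eq hcard2.symm)
  have : d ∈ X.2.image Prod.fst := by
    rw [heq]; exact Finset.mem_powersetCard.2 ⟨hd, hd2⟩
  simpa using this

lemma sbit_iff_of_mem {X : PreDPS} (hX : IsDPS X) {D : Dividon} (hD : D ∈ X.2)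
    (T : Finset ℕ) : sbit X D.1 T ↔ ∃ dv ∈ D.2, T ⊆ dv := by
  constructor
  · rintro ⟨D', hD', h1, h2⟩
    have := hX.2.2.2 D' hD' D hD h1
    rwa [this] at h2
  · intro h; exact ⟨D, hD, rfl, h⟩

lemma sbit_iff_phi {X : PreDPS} (hX : IsDPS X) {D : Dividon} (hD : D ∈ X.2)
    {T : Finset ℕ} (hT : T.card = 2) : sbit X D.1 T ↔ phi D.2 T = 1 := by
  rw [sbit_iff_of_mem hX hD, phi_eq_one_iff hT]

end Aux

section SetHelpers

lemma pair_ne_left {x y u v : ℕ} (h1 : x ≠ u) (h2 : x ≠ v) :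
    ({x, y} : Finset ℕ) ≠ {u, v} := by
  intro h
  have : x ∈ ({u, v} : Finset ℕ) := by rw [← h]; simp
  simp only [Finset.mem_insert, Finset.mem_singleton] at this
  tauto

lemma pair_ne_right {x y u v : ℕ} (h1 : y ≠ u) (h2 : y ≠ v) :
    ({x, y} : Finset ℕ) ≠ {u, v} := by
  intro h
  have : y ∈ ({u, v} : Finset ℕ) := by rw [← h]; simp
  simp only [Finset.mem_insert, Finset.mem_singleton] at this
  tauto

lemma card4 {a b c d : ℕ} (hab : a ≠ b) (hac : a ≠ c) (had : a ≠ d)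
    (hbc : b ≠ c) (hbd : b ≠ d) (hcd : c ≠ d) :
    ({a, b, c, d} : Finset ℕ).card = 4 := by
  rw [Finset.card_insert_of_notMem (by simp [hab, hac, had]),
    Finset.card_insert_of_notMem (by simp [hbc, hbd]),
    Finset.card_insert_of_notMem (by simp [hcd]), Finset.card_singleton]

lemma sdiff_pair {a b c d : ℕ} (hac : a ≠ c) (had : a ≠ d)
    (hbc : b ≠ c) (hbd : b ≠ d) :
    ({a, b, c, d} : Finset ℕ) \ {a, b} = {c, d} := by
  ext x; simp only [Finset.mem_sdiff, Finset.mem_insert, Finset.mem_singleton]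
  omega

lemma card_eq_four {s : Finset ℕ} (h : s.card = 4) :
    ∃ a b c d : ℕ, a ≠ b ∧ a ≠ c ∧ a ≠ d ∧ b ≠ c ∧ b ≠ d ∧ c ≠ d ∧
      s = {a, b, c, d} := by
  obtain ⟨a, t, hat, rfl, ht⟩ := Finset.card_eq_succ.1 h
  obtain ⟨b, c, d, hbc, hbd, hcd, rfl⟩ := Finset.card_eq_three.1 ht
  simp only [Finset.mem_insert, Finset.mem_singleton] at hat
  push_neg at hat
  exact ⟨a, b, c, d, hat.1, hat.2.1, hat.2.2, hbc, hbd, hcd, rfl⟩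

lemma powersetCard_two_quad {a b c d : ℕ} (hab : a ≠ b) (hac : a ≠ c)
    (had : a ≠ d) (hbc : b ≠ c) (hbd : b ≠ d) (hcd : c ≠ d) :
    ({a, b, c, d} : Finset ℕ).powersetCard 2 =
      {{a, b}, {a, c}, {a, d}, {b, c}, {b, d}, {c, d}} := by
  ext s
  simp only [Finset.mem_powersetCard, Finset.mem_insert, Finset.mem_singleton]
  constructor
  · rintro ⟨hsub, hcard⟩
    obtain ⟨x, y, hxy, rfl⟩ := Finset.card_eq_two.1 hcard
    have hx : x ∈ ({a, b, c, d} : Finset ℕ) := hsub (by simp)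
    have hy : y ∈ ({a, b, c, d} : Finset ℕ) := hsub (by simp)
    simp only [Finset.mem_insert, Finset.mem_singleton] at hx hy
    rcases hx with rfl | rfl | rfl | rfl <;> rcases hy with rfl | rfl | rfl | rfl <;>
      simp_all [Finset.pair_comm]
  · intro h
    rcases h with rfl | rfl | rfl | rfl | rfl | rfl <;>
      refine ⟨?_, Finset.card_pair (by omega)⟩ <;>
      · intro x hx; simp only [Finset.mem_insert, Finset.mem_singleton] at hx ⊢; omega

end SetHelpers

section Restrict

/-- The candidate sub div point set of `X` on `Ps`. -/
noncomputable def rdelta (X : PreDPS) (Ps d : Finset ℕ) : Finset (Finset ℕ) :=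
  if sbit X d (Ps \ d) then {Ps \ d, ∅} else (Ps \ d).image fun a => ({a} : Finset ℕ)

noncomputable def restr (X : PreDPS) (Ps : Finset ℕ) : PreDPS :=
  (Ps, (Ps.powersetCard 2).image fun d => (d, rdelta X Ps d))

lemma restr_fst (X : PreDPS) (Ps : Finset ℕ) : (restr X Ps).1 = Ps := rfl

lemma mem_restr {X : PreDPS} {Ps : Finset ℕ} {D : Dividon} :
    D ∈ (restr X Ps).2 ↔ ∃ d, d ⊆ Ps ∧ d.card = 2 ∧ D = (d, rdelta X Ps d) := by
  simp only [restr, Finset.mem_image, Finset.mem_powersetCard]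
  constructor
  · rintro ⟨d, ⟨h1, h2⟩, rfl⟩; exact ⟨d, h1, h2, rfl⟩
  · rintro ⟨d, h1, h2, rfl⟩; exact ⟨d, ⟨h1, h2⟩, rfl⟩

lemma card_sdiff_two {Ps d : Finset ℕ} (hPs : Ps.card = 4) (hd : d ⊆ Ps)
    (hd2 : d.card = 2) : (Ps \ d).card = 2 := by
  rw [Finset.card_sdiff_of_subset hd, hPs, hd2]

lemma isDPS_restr {X : PreDPS} {Ps : Finset ℕ} (hPs : Ps.card = 4) :
    IsDPS (restr X Ps) := by
  refine ⟨Finset.card_pos.1 (by rw [restr_fst, hPs]; norm_num), ?_, ?_, ?_⟩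
  · have hinj : Function.Injective fun d => (d, rdelta X Ps d) := by
      intro d₁ d₂ h; exact congrArg Prod.fst h
    show ((Ps.powersetCard 2).image _).card = _
    rw [Finset.card_image_of_injective _ hinj, Finset.card_powersetCard,
      restr_fst, hPs]
  · intro D hD
    obtain ⟨d, hd1, hd2, rfl⟩ := mem_restr.1 hD
    have hTc : (Ps \ d).card = 2 := card_sdiff_two hPs hd1 hd2
    refine ⟨hd2, hd1, ?_⟩
    unfold rdelta
    split
    · refine ⟨Ps \ d, ∅, fun h => ?_, rfl, by simp [restr_fst], by simp⟩
      rw [h] at hTc; simp at hTc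
    · obtain ⟨t₁, t₂, ht, hT⟩ := Finset.card_eq_two.1 hTc
      refine ⟨{t₁}, {t₂}, by simp [ht], ?_, ?_, by simp [ht]⟩
      · rw [hT]; simp
      · show {t₁} ∪ {t₂} = Ps \ d
        rw [hT]; ext x; simp
  · intro D₁ h1 D₂ h2 h
    obtain ⟨d₁, _, _, rfl⟩ := mem_restr.1 h1
    obtain ⟨d₂, _, _, rfl⟩ := mem_restr.1 h2
    simp only at h; rw [h]

lemma mem_Fudps {Z : PreDPS} {U : Dividon} :
    U ∈ (Fudps Z).2 ↔ ∃ D ∈ Z.2, ∃ T, T ⊆ Z.1 \ D.1 ∧ T.card = 2 ∧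
      U = (D.1, if ∃ dv ∈ D.2, T ⊆ dv then ({T, ∅} : Finset (Finset ℕ))
                else T.image fun a => ({a} : Finset ℕ)) := by
  simp only [Fudps, Finset.mem_biUnion, Finset.mem_image, Finset.mem_powersetCard]
  constructor
  · rintro ⟨D, hD, T, ⟨h1, h2⟩, rfl⟩; exact ⟨D, hD, T, h1, h2, rfl⟩
  · rintro ⟨D, hD, T, h1, h2, rfl⟩; exact ⟨D, hD, T, ⟨h1, h2⟩, rfl⟩

end Restrict

section Sdps

lemma unionOf_rdelta (X : PreDPS) (Ps d : Finset ℕ) :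
    unionOf (rdelta X Ps d) = Ps \ d := by
  unfold rdelta; split
  · exact unionOf_pair_empty _
  · exact unionOf_image_singleton _

lemma rdelta_cond {X : PreDPS} {Ps d : Finset ℕ} (hTc : (Ps \ d).card = 2) :
    (∃ dv ∈ rdelta X Ps d, Ps \ d ⊆ dv) ↔ sbit X d (Ps \ d) := by
  unfold rdelta; split <;> rename_i h
  · simp only [Finset.mem_insert, Finset.mem_singleton]
    constructor
    · intro _; exact h
    · intro _; exact ⟨Ps \ d, Or.inl rfl, le_refl _⟩
  · simp only [Finset.mem_image]
    constructor
    · rintro ⟨dv, ⟨a, _, rfl⟩, hsub⟩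
      have := Finset.card_le_card hsub
      simp [hTc] at this
    · intro hs; exact absurd hs h

lemma branch_eq_rdelta {X : PreDPS} {Ps d : Finset ℕ} (hTc : (Ps \ d).card = 2) :
    (if ∃ dv ∈ rdelta X Ps d, Ps \ d ⊆ dv then ({Ps \ d, ∅} : Finset (Finset ℕ))
      else (Ps \ d).image fun a => ({a} : Finset ℕ)) = rdelta X Ps d := by
  rw [if_congr (rdelta_cond hTc) rfl rfl]
  unfold rdelta
  by_cases h : sbit X d (Ps \ d) <;> simp [h]

lemma branchD_eq_rdelta {X : PreDPS} (hX : IsDPS X) {Ps d : Finset ℕ} {D : Dividon}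
    (hD : D ∈ X.2) (hDd : D.1 = d) :
    (if ∃ dv ∈ D.2, Ps \ d ⊆ dv then ({Ps \ d, ∅} : Finset (Finset ℕ))
      else (Ps \ d).image fun a => ({a} : Finset ℕ)) = rdelta X Ps d := by
  have hc : (∃ dv ∈ D.2, Ps \ d ⊆ dv) ↔ sbit X d (Ps \ d) := by
    rw [← hDd]; exact (sbit_iff_of_mem hX hD _).symm
  rw [if_congr hc rfl rfl]
  unfold rdelta
  by_cases h : sbit X d (Ps \ d) <;> simp [h]

lemma subset_sdiff_eq {Ps d T : Finset ℕ} (hT : T ⊆ Ps) (hTd : Disjoint T d)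
    (hTc : T.card = 2) (hc : (Ps \ d).card = 2) : T = Ps \ d := by
  have hsub : T ⊆ Ps \ d := Finset.subset_sdiff.2 ⟨hT, hTd⟩
  exact Finset.eq_of_subset_of_card_le hsub (by omega)

lemma isSdps_restr {X : PreDPS} (hX : IsDPS X) {Ps : Finset ℕ}
    (hsub : Ps ⊆ X.1) (hPs : Ps.card = 4) : IsSdps X Ps (restr X Ps) := by
  refine ⟨hsub, by omega, isDPS_restr hPs, rfl, ?_⟩
  ext U
  rw [Finset.mem_filter, mem_Fudps, mem_Fudps]
  constructor
  · rintro ⟨D, hD, T, hT1, hT2, rfl⟩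
    obtain ⟨d, hd1, hd2, rfl⟩ := mem_restr.1 hD
    simp only [restr_fst] at hT1
    have hTc : (Ps \ d).card = 2 := card_sdiff_two hPs hd1 hd2
    have hTeq : T = Ps \ d := Finset.eq_of_subset_of_card_le hT1 (by omega)
    subst hTeq
    obtain ⟨Dd, hDd, hDdd⟩ := exists_dividon hX (hd1.trans hsub) hd2
    constructor
    · refine ⟨Dd, hDd, Ps \ d, ?_, hTc, ?_⟩
      · rw [hDdd]; exact Finset.sdiff_subset_sdiff hsub (le_refl _)
      · rw [branch_eq_rdelta hTc, hDdd, branchD_eq_rdelta hX hDd hDdd]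
    · show xi _ ⊆ Ps
      unfold xi
      rw [branch_eq_rdelta hTc]
      simp only [unionOf_rdelta]
      rw [Finset.union_sdiff_of_subset hd1]
  · rintro ⟨⟨D, hD, T, hT1, hT2, rfl⟩, hxi⟩
    have hval := hX.2.2.1 D hD
    have huo : unionOf (if ∃ dv ∈ D.2, T ⊆ dv then ({T, ∅} : Finset (Finset ℕ))
        else T.image fun a => ({a} : Finset ℕ)) = T := by
      split
      · exact unionOf_pair_empty _
      · exact unionOf_image_singleton _
    unfold xi at hxi
    simp only [huo] at hxi
    have hd1 : D.1 ⊆ Ps := (Finset.union_subset_iff.1 hxi).1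
    have hTPs : T ⊆ Ps := (Finset.union_subset_iff.1 hxi).2
    have hTc : (Ps \ D.1).card = 2 := card_sdiff_two hPs hd1 hval.1
    have hTd : Disjoint T D.1 := by
      have := Finset.subset_sdiff.1 hT1
      exact this.2
    have hTeq : T = Ps \ D.1 := subset_sdiff_eq hTPs hTd hT2 hTc
    subst hTeq
    refine ⟨(D.1, rdelta X Ps D.1), mem_restr.2 ⟨D.1, hd1, hval.1, rfl⟩,
      Ps \ D.1, ?_, hTc, ?_⟩
    · simp [restr_fst]
    · rw [branchD_eq_rdelta hX hD rfl, branch_eq_rdelta hTc]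

lemma isSdps_unique {X : PreDPS} (hX : IsDPS X) {Ps : Finset ℕ} {Y : PreDPS}
    (hPs : Ps.card = 4) (hY : IsSdps X Ps Y) : Y = restr X Ps := by
  obtain ⟨hsub, _, hYdps, hY1, hfeq⟩ := hY
  have hYsub : Y.2 ⊆ (restr X Ps).2 := by
    intro D hD
    have hval := hYdps.2.2.1 D hD
    obtain ⟨hd2, hd1, A, B, hAB, hδ, hABu, hABi⟩ := hval
    rw [hY1] at hd1 hABu
    set d := D.1 with hd
    have hTc : (Ps \ d).card = 2 := card_sdiff_two hPs hd1 hd2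
    set T := Ps \ d with hTdef
    -- the unit dividon of D
    have hU : (d, if ∃ dv ∈ D.2, T ⊆ dv then ({T, ∅} : Finset (Finset ℕ))
        else T.image fun a => ({a} : Finset ℕ)) ∈ (Fudps Y).2 := by
      refine mem_Fudps.2 ⟨D, hD, T, ?_, hTc, rfl⟩
      rw [hY1]
    rw [hfeq, Finset.mem_filter] at hU
    obtain ⟨hUX, _⟩ := hU
    obtain ⟨D', hD', T', hT1', hT2', hUeq⟩ := mem_Fudps.1 hUX
    have hD'd : D'.1 = d := (congrArg Prod.fst hUeq).symm
    have hsnd := congrArg Prod.snd hUeq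
    simp only at hsnd
    have hT'T : T' = T := by
      have := congrArg unionOf hsnd
      revert this
      split <;> split <;>
        simp only [unionOf_pair_empty, unionOf_image_singleton] <;> exact fun h => h.symm
    subst hT'T
    -- the conditions agree
    have hcond : (∃ dv ∈ D.2, T ⊆ dv) ↔ sbit X d T := by
      have hcx : (∃ dv ∈ D'.2, T ⊆ dv) ↔ sbit X d T := by
        rw [← hD'd]; exact (sbit_iff_of_mem hX hD' _).symm
      rw [← hcx]
      by_cases h1 : ∃ dv ∈ D.2, T ⊆ dv <;> by_cases h2 : ∃ dv ∈ D'.2, T ⊆ dv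
      · simp [h1, h2]
      · rw [if_pos h1, if_neg h2] at hsnd
        exact absurd hsnd (pair_split_ne T hTc)
      · rw [if_neg h1, if_pos h2] at hsnd
        exact absurd hsnd.symm (pair_split_ne T hTc)
      · simp [h1, h2]
    -- identify D.2 with rdelta
    have hδr : D.2 = rdelta X Ps d := by
      unfold rdelta
      rw [← hTdef]
      by_cases hs : sbit X d T
      · rw [if_pos hs]
        have hcy : ∃ dv ∈ D.2, T ⊆ dv := hcond.2 hs
        obtain ⟨dv, hdv, hdvT⟩ := hcy
        rw [hδ] at hdv
        simp only [Finset.mem_insert, Finset.mem_singleton] at hdv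
        have key : ∀ A' B' : Finset ℕ, A' ∪ B' = T → A' ∩ B' = ∅ → T ⊆ A' →
            ({A', B'} : Finset (Finset ℕ)) = {T, ∅} := by
          intro A' B' hu hi hTs
          have hBsub : B' ⊆ A' := le_trans (Finset.subset_union_right) (hu ▸ hTs)
          have hB : B' = ∅ := by
            rw [← hi]; rw [Finset.inter_eq_right.2 hBsub]
          have hA : A' = T := by rw [← hu, hB, Finset.union_empty]
          rw [hA, hB]
        rcases hdv with rfl | rfl
        · rw [hδ]; exact key _ _ hABu hABi hdvT
        · rw [hδ]; rw [Finset.pair_comm]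
          rw [key _ _ (by rw [Finset.union_comm]; exact hABu)
            (by rw [Finset.inter_comm]; exact hABi) hdvT]
      · rw [if_neg hs]
        have hcy : ¬ ∃ dv ∈ D.2, T ⊆ dv := fun h => hs (hcond.1 h)
        rw [hδ] at hcy
        push_neg at hcy
        have hA2 : ¬ T ⊆ A := hcy A (by simp)
        have hB2 : ¬ T ⊆ B := hcy B (by simp)
        have hAne : A ≠ ∅ := by
          rintro rfl; rw [Finset.empty_union] at hABu; exact hB2 (le_of_eq hABu.symm)
        have hBne : B ≠ ∅ := by
          rintro rfl; rw [Finset.union_empty] at hABu; exact hA2 (le_of_eq hABu.symm)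
        have hdisj : Disjoint A B := Finset.disjoint_iff_inter_eq_empty.2 hABi
        have hcards : A.card + B.card = 2 := by
          rw [← Finset.card_union_of_disjoint hdisj, hABu]; exact hTc
        have hA1 : A.card = 1 := by
          have := Finset.card_pos.2 (Finset.nonempty_of_ne_empty hAne)
          have := Finset.card_pos.2 (Finset.nonempty_of_ne_empty hBne)
          omega
        have hB1 : B.card = 1 := by omega
        obtain ⟨a0, ha0⟩ := Finset.card_eq_one.1 hA1
        obtain ⟨b0, hb0⟩ := Finset.card_eq_one.1 hB1
        have hTab : T = {a0, b0} := by
          rw [← hABu, ha0, hb0]; ext x; simp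
        rw [hδ, ha0, hb0, hTab, Finset.image_insert, Finset.image_singleton]
    have : D = (d, rdelta X Ps d) := by
      rw [← hδr, hd]
    rw [this]
    exact mem_restr.2 ⟨d, hd1, hd2, rfl⟩
  have hc1 : Y.2.card = 6 := by
    have := hYdps.2.1
    rw [hY1, hPs] at this
    exact this.trans (by decide)
  have hc2 : (restr X Ps).2.card = 6 := by
    have := (isDPS_restr (X := X) hPs).2.1
    rw [restr_fst, hPs] at this
    exact this.trans (by decide)
  have h2 : Y.2 = (restr X Ps).2 := Finset.eq_of_subset_of_card_le hYsub (by omega)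
  have h1 : Y.1 = (restr X Ps).1 := by rw [restr_fst, hY1]
  exact Prod.ext h1 h2

end Sdps

section Laws

lemma pair_subset {x y : ℕ} {s : Finset ℕ} (hx : x ∈ s) (hy : y ∈ s) :
    ({x, y} : Finset ℕ) ⊆ s := by
  intro t ht; simp only [Finset.mem_insert, Finset.mem_singleton] at ht
  rcases ht with rfl | rfl <;> assumption

lemma law_star {X : PreDPS} (hX : DPSplus X) {a b x y : ℕ}
    (hab : a ≠ b) (hax : a ≠ x) (hay : a ≠ y) (hbx : b ≠ x) (hby : b ≠ y)
    (hxy : x ≠ y) (ha : a ∈ X.1) (hb : b ∈ X.1) (hx : x ∈ X.1) (hy : y ∈ X.1) :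
    (¬ sbit X {a, b} {x, y} ↔ (sbit X {a, x} {b, y} ↔ sbit X {a, y} {b, x})) := by
  obtain ⟨hdps, hL1, _⟩ := hX
  set R : Finset ℕ := {a, b, x, y} with hR
  have hRsub : R ⊆ X.1 := by
    intro t ht; simp only [hR, Finset.mem_insert, Finset.mem_singleton] at ht
    rcases ht with rfl | rfl | rfl | rfl <;> assumption
  have hRc : R.card = 4 := card4 hab hax hay hbx hby hxy
  obtain ⟨D₁, hD₁, hD₁d⟩ := exists_dividon hdps (pair_subset ha hb) (Finset.card_pair hab)
  obtain ⟨D₂, hD₂, hD₂d⟩ := exists_dividon hdps (pair_subset ha hx) (Finset.card_pair hax)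
  obtain ⟨D₃, hD₃, hD₃d⟩ := exists_dividon hdps (pair_subset ha hy) (Finset.card_pair hay)
  have hu : D₁.1 ∪ D₂.1 ∪ D₃.1 = R := by
    rw [hD₁d, hD₂d, hD₃d]; ext t
    simp only [hR, Finset.mem_union, Finset.mem_insert, Finset.mem_singleton]
    tauto
  have hi : (D₁.1 ∩ D₂.1 ∩ D₃.1).card = 1 := by
    have : D₁.1 ∩ D₂.1 ∩ D₃.1 = {a} := by
      rw [hD₁d, hD₂d, hD₃d]; ext t
      simp only [Finset.mem_inter, Finset.mem_insert, Finset.mem_singleton]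
      omega
    rw [this, Finset.card_singleton]
  have key := hL1 R hRsub hRc D₁ hD₁ D₂ hD₂ D₃ hD₃ hu hi
  have e1 : R \ D₁.1 = {x, y} := by
    rw [hD₁d]; ext t
    simp only [hR, Finset.mem_sdiff, Finset.mem_insert, Finset.mem_singleton]; omega
  have e2 : R \ D₂.1 = {b, y} := by
    rw [hD₂d]; ext t
    simp only [hR, Finset.mem_sdiff, Finset.mem_insert, Finset.mem_singleton]; omega
  have e3 : R \ D₃.1 = {b, x} := by
    rw [hD₃d]; ext t
    simp only [hR, Finset.mem_sdiff, Finset.mem_insert, Finset.mem_singleton]; omega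
  rw [e1, e2, e3] at key
  have s1 : sbit X {a, b} {x, y} ↔ phi D₁.2 {x, y} = 1 := by
    rw [← hD₁d]; exact sbit_iff_phi hdps hD₁ (Finset.card_pair hxy)
  have s2 : sbit X {a, x} {b, y} ↔ phi D₂.2 {b, y} = 1 := by
    rw [← hD₂d]; exact sbit_iff_phi hdps hD₂ (Finset.card_pair hby)
  have s3 : sbit X {a, y} {b, x} ↔ phi D₃.2 {b, x} = 1 := by
    rw [← hD₃d]; exact sbit_iff_phi hdps hD₃ (Finset.card_pair hbx)
  rw [s1, s2, s3]
  rcases phi_zero_or_one D₁.2 {x, y} with h1 | h1 <;>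
    rcases phi_zero_or_one D₂.2 {b, y} with h2 | h2 <;>
    rcases phi_zero_or_one D₃.2 {b, x} with h3 | h3 <;>
    rw [h1, h2, h3] at key ⊢ <;> revert key <;> decide

lemma law_tri {X : PreDPS} (hX : DPSplus X) {a b x y : ℕ}
    (hab : a ≠ b) (hax : a ≠ x) (hay : a ≠ y) (hbx : b ≠ x) (hby : b ≠ y)
    (hxy : x ≠ y) (ha : a ∈ X.1) (hb : b ∈ X.1) (hx : x ∈ X.1) (hy : y ∈ X.1)
    (h1 : ¬ sbit X {a, b} {x, y}) (h2 : ¬ sbit X {a, x} {b, y}) :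
    sbit X {b, x} {a, y} := by
  obtain ⟨hdps, _, _, hL3⟩ := hX
  set R : Finset ℕ := {a, b, x, y} with hR
  have hRsub : R ⊆ X.1 := by
    intro t ht; simp only [hR, Finset.mem_insert, Finset.mem_singleton] at ht
    rcases ht with rfl | rfl | rfl | rfl <;> assumption
  have hRc : R.card = 4 := card4 hab hax hay hbx hby hxy
  obtain ⟨D₁, hD₁, hD₁d⟩ := exists_dividon hdps (pair_subset ha hb) (Finset.card_pair hab)
  obtain ⟨D₂, hD₂, hD₂d⟩ := exists_dividon hdps (pair_subset ha hx) (Finset.card_pair hax)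
  obtain ⟨D₃, hD₃, hD₃d⟩ := exists_dividon hdps (pair_subset hb hx) (Finset.card_pair hbx)
  have hne12 : D₁ ≠ D₂ := by
    intro h
    have : D₁.1 = D₂.1 := congrArg Prod.fst h
    rw [hD₁d, hD₂d] at this
    exact pair_ne_right hab.symm hbx this
  have hne13 : D₁ ≠ D₃ := by
    intro h
    have : D₁.1 = D₃.1 := congrArg Prod.fst h
    rw [hD₁d, hD₃d] at this
    exact pair_ne_left hab hax this
  have hne23 : D₂ ≠ D₃ := by
    intro h
    have : D₂.1 = D₃.1 := congrArg Prod.fst h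
    rw [hD₂d, hD₃d] at this
    exact pair_ne_left hab hax this
  have hu : D₁.1 ∪ D₂.1 ∪ D₃.1 ⊆ R := by
    rw [hD₁d, hD₂d, hD₃d]
    intro t ht
    simp only [Finset.mem_union, Finset.mem_insert, Finset.mem_singleton] at ht
    simp only [hR, Finset.mem_insert, Finset.mem_singleton]
    tauto
  have hc3 : (D₁.1 ∪ D₂.1 ∪ D₃.1).card = 3 := by
    have : D₁.1 ∪ D₂.1 ∪ D₃.1 = {a, b, x} := by
      rw [hD₁d, hD₂d, hD₃d]; ext t
      simp only [Finset.mem_union, Finset.mem_insert, Finset.mem_singleton]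
      tauto
    rw [this, Finset.card_insert_of_notMem (by simp [hab, hax]),
      Finset.card_insert_of_notMem (by simp [hbx]), Finset.card_singleton]
  have e1 : R \ D₁.1 = {x, y} := by
    rw [hD₁d]; ext t
    simp only [hR, Finset.mem_sdiff, Finset.mem_insert, Finset.mem_singleton]; omega
  have e2 : R \ D₂.1 = {b, y} := by
    rw [hD₂d]; ext t
    simp only [hR, Finset.mem_sdiff, Finset.mem_insert, Finset.mem_singleton]; omega
  have e3 : R \ D₃.1 = {a, y} := by
    rw [hD₃d]; ext t
    simp only [hR, Finset.mem_sdiff, Finset.mem_insert, Finset.mem_singleton]; omega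
  have p1 : phi D₁.2 (R \ D₁.1) = 0 := by
    rw [e1]
    rcases phi_zero_or_one D₁.2 {x, y} with h | h
    · exact h
    · have hs : sbit X D₁.1 {x, y} := (sbit_iff_phi hdps hD₁ (Finset.card_pair hxy)).2 h
      rw [hD₁d] at hs
      exact absurd hs h1
  have p2 : phi D₂.2 (R \ D₂.1) = 0 := by
    rw [e2]
    rcases phi_zero_or_one D₂.2 {b, y} with h | h
    · exact h
    · have hs : sbit X D₂.1 {b, y} := (sbit_iff_phi hdps hD₂ (Finset.card_pair hby)).2 h
      rw [hD₂d] at hs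
      exact absurd hs h2
  have key := hL3 R hRsub hRc D₁ hD₁ D₂ hD₂ D₃ hD₃ hne12 hne13 hne23 hu hc3 p1 p2
  rw [e3] at key
  rw [← hD₃d]
  exact (sbit_iff_phi hdps hD₃ (Finset.card_pair hay)).2 key

end Laws

section Classify

set_option maxHeartbeats 1000000 in
lemma classify (P1 P2 P3 P4 P5 P6 : Prop)
    (s1 : ¬P1 ↔ (P2 ↔ P3)) (s2 : ¬P1 ↔ (P4 ↔ P5)) (s3 : ¬P2 ↔ (P4 ↔ P6))
    (s4 : ¬P3 ↔ (P5 ↔ P6)) (t1 : ¬P1 → ¬P2 → P4) :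
    (¬P1 ∧ ¬P2 ∧ ¬P3 ∧ P4 ∧ P5 ∧ P6) ∨ (¬P1 ∧ P2 ∧ P3 ∧ ¬P4 ∧ ¬P5 ∧ P6) ∨
    (P1 ∧ ¬P2 ∧ P3 ∧ ¬P4 ∧ P5 ∧ ¬P6) ∨ (P1 ∧ P2 ∧ ¬P3 ∧ P4 ∧ ¬P5 ∧ ¬P6) ∨
    (P1 ∧ ¬P2 ∧ P3 ∧ P4 ∧ ¬P5 ∧ P6) ∨ (P1 ∧ P2 ∧ ¬P3 ∧ ¬P4 ∧ P5 ∧ P6) ∨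
    (¬P1 ∧ P2 ∧ P3 ∧ P4 ∧ P5 ∧ ¬P6) := by
  by_cases h1 : P1 <;> by_cases h2 : P2 <;> by_cases h3 : P3 <;>
    by_cases h4 : P4 <;> by_cases h5 : P5 <;> by_cases h6 : P6 <;> simp_all

/-- The quadruple `Ps` is of `Conc₄¹` type in `X`. -/
def triQ (X : PreDPS) (Ps : Finset ℕ) : Prop :=
  ∃ a b c d : ℕ, a ≠ b ∧ a ≠ c ∧ a ≠ d ∧ b ≠ c ∧ b ≠ d ∧ c ≠ d ∧
    Ps = {a, b, c, d} ∧
    ¬ sbit X {a, b} {c, d} ∧ ¬ sbit X {a, c} {b, d} ∧ ¬ sbit X {a, d} {b, c} ∧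
    sbit X {b, c} {a, d} ∧ sbit X {b, d} {a, c} ∧ sbit X {c, d} {a, b}

/-- The quadruple `Ps` is of `Conv₄` type in `X`. -/
def cnvQ (X : PreDPS) (Ps : Finset ℕ) : Prop :=
  ∃ a b c d : ℕ, a ≠ b ∧ a ≠ c ∧ a ≠ d ∧ b ≠ c ∧ b ≠ d ∧ c ≠ d ∧
    Ps = {a, b, c, d} ∧
    sbit X {a, b} {c, d} ∧ ¬ sbit X {a, c} {b, d} ∧ sbit X {a, d} {b, c} ∧
    sbit X {b, c} {a, d} ∧ ¬ sbit X {b, d} {a, c} ∧ sbit X {c, d} {a, b}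

set_option maxHeartbeats 1000000 in
lemma tri_or_cnv {X : PreDPS} (hX : DPSplus X) {Ps : Finset ℕ}
    (hsub : Ps ⊆ X.1) (hPs : Ps.card = 4) : triQ X Ps ∨ cnvQ X Ps := by
  obtain ⟨a, b, c, d, hab, hac, had, hbc, hbd, hcd, rfl⟩ := card_eq_four hPs
  have ha : a ∈ X.1 := hsub (by simp)
  have hb : b ∈ X.1 := hsub (by simp)
  have hc : c ∈ X.1 := hsub (by simp)
  have hd : d ∈ X.1 := hsub (by simp)
  have s1 := law_star hX hab hac had hbc hbd hcd ha hb hc hd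
  have s2 := law_star hX hab.symm hbc hbd hac had hcd hb ha hc hd
  rw [Finset.pair_comm b a] at s2
  have s3 := law_star hX hac.symm hbc.symm hcd hab had hbd hc ha hb hd
  rw [Finset.pair_comm c a, Finset.pair_comm c b] at s3
  have s4 := law_star hX had.symm hbd.symm hcd.symm hab hac hbc hd ha hb hc
  rw [Finset.pair_comm d a, Finset.pair_comm d b, Finset.pair_comm d c] at s4
  have t1 := law_tri hX hab hac had hbc hbd hcd ha hb hc hd
  have := classify (sbit X {a, b} {c, d}) (sbit X {a, c} {b, d})
    (sbit X {a, d} {b, c}) (sbit X {b, c} {a, d}) (sbit X {b, d} {a, c})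
    (sbit X {c, d} {a, b}) s1 s2 s3 s4 t1
  have hpeq : ∀ u v w z : ℕ, ({u, v, w, z} : Finset ℕ) = {a, b, c, d} →
      ({a, b, c, d} : Finset ℕ) = {u, v, w, z} := fun _ _ _ _ h => h.symm
  have pc : ∀ u v : ℕ, ({u, v} : Finset ℕ) = {v, u} := fun u v => Finset.pair_comm u v
  have e2 : ({a, b, c, d} : Finset ℕ) = {b, a, c, d} := by
    ext t; simp only [Finset.mem_insert, Finset.mem_singleton]; omega
  have e3 : ({a, b, c, d} : Finset ℕ) = {c, a, b, d} := by
    ext t; simp only [Finset.mem_insert, Finset.mem_singleton]; omega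
  have e4 : ({a, b, c, d} : Finset ℕ) = {d, a, b, c} := by
    ext t; simp only [Finset.mem_insert, Finset.mem_singleton]; omega
  have e6 : ({a, b, c, d} : Finset ℕ) = {a, b, d, c} := by
    ext t; simp only [Finset.mem_insert, Finset.mem_singleton]; omega
  have e7 : ({a, b, c, d} : Finset ℕ) = {a, c, b, d} := by
    ext t; simp only [Finset.mem_insert, Finset.mem_singleton]; omega
  rcases this with ⟨h1, h2, h3, h4, h5, h6⟩ | ⟨h1, h2, h3, h4, h5, h6⟩ |
    ⟨h1, h2, h3, h4, h5, h6⟩ | ⟨h1, h2, h3, h4, h5, h6⟩ |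
    ⟨h1, h2, h3, h4, h5, h6⟩ | ⟨h1, h2, h3, h4, h5, h6⟩ | ⟨h1, h2, h3, h4, h5, h6⟩
  · exact Or.inl ⟨a, b, c, d, hab, hac, had, hbc, hbd, hcd, rfl, h1, h2, h3, h4, h5, h6⟩
  · -- apex b
    rw [← pc b a] at h1 h6
    exact Or.inl ⟨b, a, c, d, hab.symm, hbc, hbd, hac, had, hcd, e2, h1, h4, h5, h2, h3, h6⟩
  · -- apex c
    rw [← pc c a] at h2 h5
    rw [← pc c b] at h4 h3
    exact Or.inl ⟨c, a, b, d, hac.symm, hbc.symm, hcd, hab, had, hbd, e3, h2, h4, h6, h1, h3, h5⟩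
  · -- apex d
    rw [← pc d a] at h3 h4
    rw [← pc d b] at h5 h2
    rw [← pc d c] at h6 h1
    exact Or.inl ⟨d, a, b, c, had.symm, hbd.symm, hcd.symm, hab, hac, hbc, e4, h3, h5, h6, h1, h2, h4⟩
  · exact Or.inr ⟨a, b, c, d, hab, hac, had, hbc, hbd, hcd, rfl, h1, h2, h3, h4, h5, h6⟩
  · -- conv, zeros at ad,bc : order (a,b,d,c)
    rw [← pc d c] at h1 h6
    exact Or.inr ⟨a, b, d, c, hab, had, hac, hbd, hbc, hcd.symm, e6, h1, h3, h2, h5, h4, h6⟩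
  · -- conv, zeros at ab,cd : order (a,c,b,d)
    rw [← pc c b] at h3 h4
    exact Or.inr ⟨a, c, b, d, hac, hab, had, hbc.symm, hcd, hbd, e7, h2, h1, h3, h4, h6, h5⟩

end Classify

section Isom

lemma pair_cases {a b c d : ℕ} {s : Finset ℕ} (hab : a ≠ b) (hac : a ≠ c)
    (had : a ≠ d) (hbc : b ≠ c) (hbd : b ≠ d) (hcd : c ≠ d)
    (hsub : s ⊆ {a, b, c, d}) (h2 : s.card = 2) :
    s = {a, b} ∨ s = {a, c} ∨ s = {a, d} ∨ s = {b, c} ∨ s = {b, d} ∨ s = {c, d} := by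
  have : s ∈ ({a, b, c, d} : Finset ℕ).powersetCard 2 :=
    Finset.mem_powersetCard.2 ⟨hsub, h2⟩
  rw [powersetCard_two_quad hab hac had hbc hbd hcd] at this
  simpa using this

set_option maxHeartbeats 1000000 in
lemma isom_conc {X : PreDPS} {Ps : Finset ℕ} (h : triQ X Ps) :
    Isom (restr X Ps) Conc41 := by
  obtain ⟨a, b, c, d, hab, hac, had, hbc, hbd, hcd, hP, n1, n2, n3, p1, p2, p3⟩ := h
  subst hP
  set f : ℕ → ℕ := fun n =>
    if n = a then 1 else if n = b then 2 else if n = c then 3 else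
      if n = d then 4 else 0 with hf
  have hfa : f a = 1 := by simp [hf]
  have hfb : f b = 2 := by simp [hf, hab.symm]
  have hfc : f c = 3 := by simp [hf, hac.symm, hbc.symm]
  have hfd : f d = 4 := by simp [hf, had.symm, hbd.symm, hcd.symm]
  have sd1 : ({a, b, c, d} : Finset ℕ) \ {a, b} = {c, d} := by
    ext t; simp only [Finset.mem_sdiff, Finset.mem_insert, Finset.mem_singleton]; omega
  have sd2 : ({a, b, c, d} : Finset ℕ) \ {a, c} = {b, d} := by
    ext t; simp only [Finset.mem_sdiff, Finset.mem_insert, Finset.mem_singleton]; omega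
  have sd3 : ({a, b, c, d} : Finset ℕ) \ {a, d} = {b, c} := by
    ext t; simp only [Finset.mem_sdiff, Finset.mem_insert, Finset.mem_singleton]; omega
  have sd4 : ({a, b, c, d} : Finset ℕ) \ {b, c} = {a, d} := by
    ext t; simp only [Finset.mem_sdiff, Finset.mem_insert, Finset.mem_singleton]; omega
  have sd5 : ({a, b, c, d} : Finset ℕ) \ {b, d} = {a, c} := by
    ext t; simp only [Finset.mem_sdiff, Finset.mem_insert, Finset.mem_singleton]; omega
  have sd6 : ({a, b, c, d} : Finset ℕ) \ {c, d} = {a, b} := by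
    ext t; simp only [Finset.mem_sdiff, Finset.mem_insert, Finset.mem_singleton]; omega
  refine ⟨f, ⟨?_, ?_, ?_⟩, ?_⟩
  · intro x hx
    simp only [restr_fst, Finset.coe_insert, Set.mem_insert_iff, Finset.coe_singleton,
      Set.mem_singleton_iff] at hx
    rcases hx with rfl | rfl | rfl | rfl <;>
      simp [Conc41, hfa, hfb, hfc, hfd]
  · intro x hx y hy hxy
    simp only [restr_fst, Finset.coe_insert, Set.mem_insert_iff, Finset.coe_singleton,
      Set.mem_singleton_iff] at hx hy
    rcases hx with rfl | rfl | rfl | rfl <;> rcases hy with rfl | rfl | rfl | rfl <;>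
      simp only [hfa, hfb, hfc, hfd] at hxy <;> omega
  · intro y hy
    simp only [Conc41, Finset.coe_insert, Set.mem_insert_iff, Finset.coe_singleton,
      Set.mem_singleton_iff] at hy
    rcases hy with rfl | rfl | rfl | rfl
    · exact ⟨a, by simp [restr_fst], hfa⟩
    · exact ⟨b, by simp [restr_fst], hfb⟩
    · exact ⟨c, by simp [restr_fst], hfc⟩
    · exact ⟨d, by simp [restr_fst], hfd⟩
  · intro D hD
    obtain ⟨d', hd1, hd2, rfl⟩ := mem_restr.1 hD
    rcases pair_cases hab hac had hbc hbd hcd hd1 hd2 with rfl | rfl | rfl | rfl | rfl | rfl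
    · have hδ : rdelta X {a, b, c, d} {a, b} = {{c}, {d}} := by
        unfold rdelta; rw [sd1, if_neg n1, Finset.image_insert, Finset.image_singleton]
      rw [hδ]
      simp [Conc41, hfa, hfb, hfc, hfd]
    · have hδ : rdelta X {a, b, c, d} {a, c} = {{b}, {d}} := by
        unfold rdelta; rw [sd2, if_neg n2, Finset.image_insert, Finset.image_singleton]
      rw [hδ]
      simp [Conc41, hfa, hfb, hfc, hfd]
    · have hδ : rdelta X {a, b, c, d} {a, d} = {{b}, {c}} := by
        unfold rdelta; rw [sd3, if_neg n3, Finset.image_insert, Finset.image_singleton]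
      rw [hδ]
      simp [Conc41, hfa, hfb, hfc, hfd]
    · have hδ : rdelta X {a, b, c, d} {b, c} = {{a, d}, ∅} := by
        unfold rdelta; rw [sd4, if_pos p1]
      rw [hδ]
      simp [Conc41, hfa, hfb, hfc, hfd]
    · have hδ : rdelta X {a, b, c, d} {b, d} = {{a, c}, ∅} := by
        unfold rdelta; rw [sd5, if_pos p2]
      rw [hδ]
      simp [Conc41, hfa, hfb, hfc, hfd]
    · have hδ : rdelta X {a, b, c, d} {c, d} = {{a, b}, ∅} := by
        unfold rdelta; rw [sd6, if_pos p3]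
      rw [hδ]
      simp [Conc41, hfa, hfb, hfc, hfd]

end Isom

section Isom2

set_option maxHeartbeats 1000000 in
lemma isom_conv {X : PreDPS} {Ps : Finset ℕ} (h : cnvQ X Ps) :
    Isom (restr X Ps) Conv4 := by
  obtain ⟨a, b, c, d, hab, hac, had, hbc, hbd, hcd, hP, p1, n2, p3, p4, n5, p6⟩ := h
  subst hP
  set f : ℕ → ℕ := fun n =>
    if n = a then 1 else if n = b then 2 else if n = c then 3 else
      if n = d then 4 else 0 with hf
  have hfa : f a = 1 := by simp [hf]
  have hfb : f b = 2 := by simp [hf, hab.symm]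
  have hfc : f c = 3 := by simp [hf, hac.symm, hbc.symm]
  have hfd : f d = 4 := by simp [hf, had.symm, hbd.symm, hcd.symm]
  have sd1 : ({a, b, c, d} : Finset ℕ) \ {a, b} = {c, d} := by
    ext t; simp only [Finset.mem_sdiff, Finset.mem_insert, Finset.mem_singleton]; omega
  have sd2 : ({a, b, c, d} : Finset ℕ) \ {a, c} = {b, d} := by
    ext t; simp only [Finset.mem_sdiff, Finset.mem_insert, Finset.mem_singleton]; omega
  have sd3 : ({a, b, c, d} : Finset ℕ) \ {a, d} = {b, c} := by
    ext t; simp only [Finset.mem_sdiff, Finset.mem_insert, Finset.mem_singleton]; omega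
  have sd4 : ({a, b, c, d} : Finset ℕ) \ {b, c} = {a, d} := by
    ext t; simp only [Finset.mem_sdiff, Finset.mem_insert, Finset.mem_singleton]; omega
  have sd5 : ({a, b, c, d} : Finset ℕ) \ {b, d} = {a, c} := by
    ext t; simp only [Finset.mem_sdiff, Finset.mem_insert, Finset.mem_singleton]; omega
  have sd6 : ({a, b, c, d} : Finset ℕ) \ {c, d} = {a, b} := by
    ext t; simp only [Finset.mem_sdiff, Finset.mem_insert, Finset.mem_singleton]; omega
  refine ⟨f, ⟨?_, ?_, ?_⟩, ?_⟩
  · intro x hx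
    simp only [restr_fst, Finset.coe_insert, Set.mem_insert_iff, Finset.coe_singleton,
      Set.mem_singleton_iff] at hx
    rcases hx with rfl | rfl | rfl | rfl <;>
      simp [Conv4, hfa, hfb, hfc, hfd]
  · intro x hx y hy hxy
    simp only [restr_fst, Finset.coe_insert, Set.mem_insert_iff, Finset.coe_singleton,
      Set.mem_singleton_iff] at hx hy
    rcases hx with rfl | rfl | rfl | rfl <;> rcases hy with rfl | rfl | rfl | rfl <;>
      simp only [hfa, hfb, hfc, hfd] at hxy <;> omega
  · intro y hy
    simp only [Conv4, Finset.coe_insert, Set.mem_insert_iff, Finset.coe_singleton,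
      Set.mem_singleton_iff] at hy
    rcases hy with rfl | rfl | rfl | rfl
    · exact ⟨a, by simp [restr_fst], hfa⟩
    · exact ⟨b, by simp [restr_fst], hfb⟩
    · exact ⟨c, by simp [restr_fst], hfc⟩
    · exact ⟨d, by simp [restr_fst], hfd⟩
  · intro D hD
    obtain ⟨d', hd1, hd2, rfl⟩ := mem_restr.1 hD
    rcases pair_cases hab hac had hbc hbd hcd hd1 hd2 with rfl | rfl | rfl | rfl | rfl | rfl
    · have hδ : rdelta X {a, b, c, d} {a, b} = {{c, d}, ∅} := by
        unfold rdelta; rw [sd1, if_pos p1]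
      rw [hδ]
      simp [Conv4, hfa, hfb, hfc, hfd]
    · have hδ : rdelta X {a, b, c, d} {a, c} = {{b}, {d}} := by
        unfold rdelta; rw [sd2, if_neg n2, Finset.image_insert, Finset.image_singleton]
      rw [hδ]
      simp [Conv4, hfa, hfb, hfc, hfd]
    · have hδ : rdelta X {a, b, c, d} {a, d} = {{b, c}, ∅} := by
        unfold rdelta; rw [sd3, if_pos p3]
      rw [hδ]
      simp [Conv4, hfa, hfb, hfc, hfd]
    · have hδ : rdelta X {a, b, c, d} {b, c} = {{a, d}, ∅} := by
        unfold rdelta; rw [sd4, if_pos p4]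
      rw [hδ]
      simp [Conv4, hfa, hfb, hfc, hfd]
    · have hδ : rdelta X {a, b, c, d} {b, d} = {{a}, {c}} := by
        unfold rdelta; rw [sd5, if_neg n5, Finset.image_insert, Finset.image_singleton]
      rw [hδ]
      simp [Conv4, hfa, hfb, hfc, hfd]
    · have hδ : rdelta X {a, b, c, d} {c, d} = {{a, b}, ∅} := by
        unfold rdelta; rw [sd6, if_pos p6]
      rw [hδ]
      simp [Conv4, hfa, hfb, hfc, hfd]

set_option maxHeartbeats 1000000 in
lemma not_isom_conc {X : PreDPS} {Ps : Finset ℕ} (h : cnvQ X Ps) :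
    ¬ Isom (restr X Ps) Conc41 := by
  obtain ⟨a, b, c, d, hab, hac, had, hbc, hbd, hcd, hP, p1, n2, p3, p4, n5, p6⟩ := h
  subst hP
  rintro ⟨f, hbij, hmap⟩
  have sd2 : ({a, b, c, d} : Finset ℕ) \ {a, c} = {b, d} := by
    ext t; simp only [Finset.mem_sdiff, Finset.mem_insert, Finset.mem_singleton]; omega
  have sd5 : ({a, b, c, d} : Finset ℕ) \ {b, d} = {a, c} := by
    ext t; simp only [Finset.mem_sdiff, Finset.mem_insert, Finset.mem_singleton]; omega
  have hδac : rdelta X {a, b, c, d} {a, c} = {{b}, {d}} := by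
    unfold rdelta; rw [sd2, if_neg n2, Finset.image_insert, Finset.image_singleton]
  have hδbd : rdelta X {a, b, c, d} {b, d} = {{a}, {c}} := by
    unfold rdelta; rw [sd5, if_neg n5, Finset.image_insert, Finset.image_singleton]
  have hm1 : (({a, c} : Finset ℕ), ({{b}, {d}} : Finset (Finset ℕ))) ∈
      (restr X {a, b, c, d}).2 := by
    refine mem_restr.2 ⟨{a, c}, ?_, Finset.card_pair hac, by rw [hδac]⟩
    intro t ht; simp only [Finset.mem_insert, Finset.mem_singleton] at ht ⊢; omega
  have hm2 : (({b, d} : Finset ℕ), ({{a}, {c}} : Finset (Finset ℕ))) ∈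
      (restr X {a, b, c, d}).2 := by
    refine mem_restr.2 ⟨{b, d}, ?_, Finset.card_pair hbd, by rw [hδbd]⟩
    intro t ht; simp only [Finset.mem_insert, Finset.mem_singleton] at ht ⊢; omega
  have h1 := hmap _ hm1
  have h2 := hmap _ hm2
  have key : ∀ E ∈ Conc41.2, (∅ : Finset ℕ) ∉ E.2 → 1 ∈ E.1 := by decide
  have hne1 : (∅ : Finset ℕ) ∉ (({{b}, {d}} : Finset (Finset ℕ)).image (Finset.image f)) := by
    intro hmem
    simp only [Finset.mem_image, Finset.mem_insert, Finset.mem_singleton] at hmem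
    obtain ⟨v, hv, hve⟩ := hmem
    rcases hv with rfl | rfl <;> rw [Finset.image_singleton] at hve <;>
      exact Finset.singleton_ne_empty _ hve
  have hne2 : (∅ : Finset ℕ) ∉ (({{a}, {c}} : Finset (Finset ℕ)).image (Finset.image f)) := by
    intro hmem
    simp only [Finset.mem_image, Finset.mem_insert, Finset.mem_singleton] at hmem
    obtain ⟨v, hv, hve⟩ := hmem
    rcases hv with rfl | rfl <;> rw [Finset.image_singleton] at hve <;>
      exact Finset.singleton_ne_empty _ hve
  have k1 := key _ h1 hne1
  have k2 := key _ h2 hne2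
  simp only [Finset.mem_image, Finset.mem_insert, Finset.mem_singleton] at k1 k2
  obtain ⟨x, hx, hfx⟩ := k1
  obtain ⟨y, hy, hfy⟩ := k2
  have hxm : x ∈ (↑(restr X ({a, b, c, d} : Finset ℕ)).1 : Set ℕ) := by
    simp only [restr_fst, Finset.coe_insert, Set.mem_insert_iff, Finset.coe_singleton,
      Set.mem_singleton_iff]
    rcases hx with rfl | rfl <;> simp
  have hym : y ∈ (↑(restr X ({a, b, c, d} : Finset ℕ)).1 : Set ℕ) := by
    simp only [restr_fst, Finset.coe_insert, Set.mem_insert_iff, Finset.coe_singleton,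
      Set.mem_singleton_iff]
    rcases hy with rfl | rfl <;> simp
  have hxy : x = y := hbij.2.1 hxm hym (by rw [hfx, hfy])
  rcases hx with rfl | rfl <;> rcases hy with rfl | rfl <;> omega

end Isom2

section Parity

lemma divider_odd {X : PreDPS} (hX : IsDPS X) (h5 : X.1.card = 5) {d : Finset ℕ}
    (hd : d ⊆ X.1) (hd2 : d.card = 2) :
    ∑ p ∈ X.1 \ d, (if sbit X d ((X.1 \ {p}) \ d) then (1 : ZMod 2) else 0) = 1 := by
  have hc3 : (X.1 \ d).card = 3 := by rw [Finset.card_sdiff_of_subset hd, h5, hd2]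
  obtain ⟨x, y, z, hxy, hxz, hyz, hE⟩ := Finset.card_eq_three.1 hc3
  have hcomm : ∀ p : ℕ, (X.1 \ {p}) \ d = (X.1 \ d) \ {p} := fun p => sdiff_sdiff_comm
  obtain ⟨D, hD, hDd⟩ := exists_dividon hX hd hd2
  obtain ⟨_, _, A, B, hABne, hδ, hABu, hABi⟩ := hX.2.2.1 D hD
  rw [hDd, hE] at hABu
  have hmem : ∀ t, t ∈ ({x, y, z} : Finset ℕ) → (t ∈ A ∨ t ∈ B) ∧ ¬(t ∈ A ∧ t ∈ B) := by
    intro t ht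
    constructor
    · have : t ∈ A ∪ B := hABu ▸ ht
      simpa using this
    · rintro ⟨h1, h2⟩
      have : t ∈ A ∩ B := Finset.mem_inter.2 ⟨h1, h2⟩
      rw [hABi] at this; exact absurd this (Finset.notMem_empty t)
  have hsb : ∀ T : Finset ℕ, sbit X d T ↔ (T ⊆ A ∨ T ⊆ B) := by
    intro T
    rw [← hDd, sbit_iff_of_mem hX hD, hδ]
    simp
  have hsub2 : ∀ u v : ℕ, ∀ S : Finset ℕ, (({u, v} : Finset ℕ) ⊆ S ↔ (u ∈ S ∧ v ∈ S)) := by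
    intro u v S; rw [Finset.insert_subset_iff, Finset.singleton_subset_iff]
  rw [hE, Finset.sum_insert (by simp [hxy, hxz]), Finset.sum_insert (by simp [hyz]),
    Finset.sum_singleton, hcomm x, hcomm y, hcomm z, hE]
  have e1 : ({x, y, z} : Finset ℕ) \ {x} = {y, z} := by
    ext t; simp only [Finset.mem_sdiff, Finset.mem_insert, Finset.mem_singleton]; omega
  have e2 : ({x, y, z} : Finset ℕ) \ {y} = {x, z} := by
    ext t; simp only [Finset.mem_sdiff, Finset.mem_insert, Finset.mem_singleton]; omega
  have e3 : ({x, y, z} : Finset ℕ) \ {z} = {x, y} := by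
    ext t; simp only [Finset.mem_sdiff, Finset.mem_insert, Finset.mem_singleton]; omega
  rw [e1, e2, e3]
  have hs1 : sbit X d {y, z} ↔ ((y ∈ A ∧ z ∈ A) ∨ (y ∈ B ∧ z ∈ B)) := by
    rw [hsb, hsub2, hsub2]
  have hs2 : sbit X d {x, z} ↔ ((x ∈ A ∧ z ∈ A) ∨ (x ∈ B ∧ z ∈ B)) := by
    rw [hsb, hsub2, hsub2]
  have hs3 : sbit X d {x, y} ↔ ((x ∈ A ∧ y ∈ A) ∨ (x ∈ B ∧ y ∈ B)) := by
    rw [hsb, hsub2, hsub2]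
  rw [if_congr hs1 rfl rfl, if_congr hs2 rfl rfl, if_congr hs3 rfl rfl]
  obtain ⟨hxo, hxn⟩ := hmem x (by simp)
  obtain ⟨hyo, hyn⟩ := hmem y (by simp)
  obtain ⟨hzo, hzn⟩ := hmem z (by simp)
  have hxB : x ∈ B ↔ ¬ x ∈ A := ⟨fun h h' => hxn ⟨h', h⟩, fun h => hxo.resolve_left h⟩
  have hyB : y ∈ B ↔ ¬ y ∈ A := ⟨fun h h' => hyn ⟨h', h⟩, fun h => hyo.resolve_left h⟩
  have hzB : z ∈ B ↔ ¬ z ∈ A := ⟨fun h h' => hzn ⟨h', h⟩, fun h => hzo.resolve_left h⟩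
  by_cases hxA : x ∈ A <;> by_cases hyA : y ∈ A <;> by_cases hzA : z ∈ A <;>
    simp only [hxB, hyB, hzB, hxA, hyA, hzA, not_true, not_false_iff, true_and, and_true,
      false_and, and_false, or_true, true_or, or_false, false_or, if_true, if_false,
      iff_true, iff_false, not_true_eq_false, not_false_eq_true] <;>
    decide

lemma quad_sum_tri {X : PreDPS} {Ps : Finset ℕ} (h : triQ X Ps) :
    ∑ e ∈ Ps.powersetCard 2, (if sbit X e (Ps \ e) then (1 : ZMod 2) else 0) = 1 := by
  obtain ⟨a, b, c, d, hab, hac, had, hbc, hbd, hcd, rfl, n1, n2, n3, p1, p2, p3⟩ := h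
  have sd1 : ({a, b, c, d} : Finset ℕ) \ {a, b} = {c, d} := by
    ext t; simp only [Finset.mem_sdiff, Finset.mem_insert, Finset.mem_singleton]; omega
  have sd2 : ({a, b, c, d} : Finset ℕ) \ {a, c} = {b, d} := by
    ext t; simp only [Finset.mem_sdiff, Finset.mem_insert, Finset.mem_singleton]; omega
  have sd3 : ({a, b, c, d} : Finset ℕ) \ {a, d} = {b, c} := by
    ext t; simp only [Finset.mem_sdiff, Finset.mem_insert, Finset.mem_singleton]; omega
  have sd4 : ({a, b, c, d} : Finset ℕ) \ {b, c} = {a, d} := by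
    ext t; simp only [Finset.mem_sdiff, Finset.mem_insert, Finset.mem_singleton]; omega
  have sd5 : ({a, b, c, d} : Finset ℕ) \ {b, d} = {a, c} := by
    ext t; simp only [Finset.mem_sdiff, Finset.mem_insert, Finset.mem_singleton]; omega
  have sd6 : ({a, b, c, d} : Finset ℕ) \ {c, d} = {a, b} := by
    ext t; simp only [Finset.mem_sdiff, Finset.mem_insert, Finset.mem_singleton]; omega
  rw [powersetCard_two_quad hab hac had hbc hbd hcd]
  rw [Finset.sum_insert (by
        simp only [Finset.mem_insert, Finset.mem_singleton]
        push_neg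
        exact ⟨pair_ne_right hab.symm hbc, pair_ne_right hab.symm hbd,
          pair_ne_left hab hac, pair_ne_left hab had, pair_ne_left hac had⟩),
    Finset.sum_insert (by
        simp only [Finset.mem_insert, Finset.mem_singleton]
        push_neg
        exact ⟨pair_ne_right hac.symm hcd, pair_ne_left hab hac,
          pair_ne_left hab had, pair_ne_left hac had⟩),
    Finset.sum_insert (by
        simp only [Finset.mem_insert, Finset.mem_singleton]
        push_neg
        exact ⟨pair_ne_left hab hac, pair_ne_left hab had, pair_ne_left hac had⟩),
    Finset.sum_insert (by
        simp only [Finset.mem_insert, Finset.mem_singleton]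
        push_neg
        exact ⟨pair_ne_right hbc.symm hcd, pair_ne_left hbc hbd⟩),
    Finset.sum_insert (by
        simp only [Finset.mem_singleton]
        exact pair_ne_left hbc hbd),
    Finset.sum_singleton]
  rw [sd1, sd2, sd3, sd4, sd5, sd6]
  rw [if_neg n1, if_neg n2, if_neg n3, if_pos p1, if_pos p2, if_pos p3]
  decide

lemma quad_sum_cnv {X : PreDPS} {Ps : Finset ℕ} (h : cnvQ X Ps) :
    ∑ e ∈ Ps.powersetCard 2, (if sbit X e (Ps \ e) then (1 : ZMod 2) else 0) = 0 := by
  obtain ⟨a, b, c, d, hab, hac, had, hbc, hbd, hcd, rfl, p1, n2, p3, p4, n5, p6⟩ := h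
  have sd1 : ({a, b, c, d} : Finset ℕ) \ {a, b} = {c, d} := by
    ext t; simp only [Finset.mem_sdiff, Finset.mem_insert, Finset.mem_singleton]; omega
  have sd2 : ({a, b, c, d} : Finset ℕ) \ {a, c} = {b, d} := by
    ext t; simp only [Finset.mem_sdiff, Finset.mem_insert, Finset.mem_singleton]; omega
  have sd3 : ({a, b, c, d} : Finset ℕ) \ {a, d} = {b, c} := by
    ext t; simp only [Finset.mem_sdiff, Finset.mem_insert, Finset.mem_singleton]; omega
  have sd4 : ({a, b, c, d} : Finset ℕ) \ {b, c} = {a, d} := by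
    ext t; simp only [Finset.mem_sdiff, Finset.mem_insert, Finset.mem_singleton]; omega
  have sd5 : ({a, b, c, d} : Finset ℕ) \ {b, d} = {a, c} := by
    ext t; simp only [Finset.mem_sdiff, Finset.mem_insert, Finset.mem_singleton]; omega
  have sd6 : ({a, b, c, d} : Finset ℕ) \ {c, d} = {a, b} := by
    ext t; simp only [Finset.mem_sdiff, Finset.mem_insert, Finset.mem_singleton]; omega
  rw [powersetCard_two_quad hab hac had hbc hbd hcd]
  rw [Finset.sum_insert (by
        simp only [Finset.mem_insert, Finset.mem_singleton]
        push_neg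
        exact ⟨pair_ne_right hab.symm hbc, pair_ne_right hab.symm hbd,
          pair_ne_left hab hac, pair_ne_left hab had, pair_ne_left hac had⟩),
    Finset.sum_insert (by
        simp only [Finset.mem_insert, Finset.mem_singleton]
        push_neg
        exact ⟨pair_ne_right hac.symm hcd, pair_ne_left hab hac,
          pair_ne_left hab had, pair_ne_left hac had⟩),
    Finset.sum_insert (by
        simp only [Finset.mem_insert, Finset.mem_singleton]
        push_neg
        exact ⟨pair_ne_left hab hac, pair_ne_left hab had, pair_ne_left hac had⟩),
    Finset.sum_insert (by
        simp only [Finset.mem_insert, Finset.mem_singleton]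
        push_neg
        exact ⟨pair_ne_right hbc.symm hcd, pair_ne_left hbc hbd⟩),
    Finset.sum_insert (by
        simp only [Finset.mem_singleton]
        exact pair_ne_left hbc hbd),
    Finset.sum_singleton]
  rw [sd1, sd2, sd3, sd4, sd5, sd6]
  rw [if_pos p1, if_neg n2, if_pos p3, if_pos p4, if_neg n5, if_pos p6]
  decide

end Parity

section Total

lemma total_sum {X : PreDPS} (hX : IsDPS X) (h5 : X.1.card = 5) :
    ∑ Ps ∈ X.1.powersetCard 4, ∑ e ∈ Ps.powersetCard 2,
      (if sbit X e (Ps \ e) then (1 : ZMod 2) else 0) = 0 := by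
  have step1 : ∀ Ps ∈ X.1.powersetCard 4,
      ∑ e ∈ Ps.powersetCard 2, (if sbit X e (Ps \ e) then (1 : ZMod 2) else 0)
      = ∑ e ∈ X.1.powersetCard 2,
          (if e ⊆ Ps then (if sbit X e (Ps \ e) then (1 : ZMod 2) else 0) else 0) := by
    intro Ps hPs
    have hPsub := (Finset.mem_powersetCard.1 hPs).1
    have hset : Ps.powersetCard 2 = (X.1.powersetCard 2).filter (fun e => e ⊆ Ps) := by
      ext s
      simp only [Finset.mem_powersetCard, Finset.mem_filter]
      constructor
      · rintro ⟨h1, h2⟩; exact ⟨⟨h1.trans hPsub, h2⟩, h1⟩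
      · rintro ⟨⟨_, h2⟩, h3⟩; exact ⟨h3, h2⟩
    rw [hset, Finset.sum_filter]
  rw [Finset.sum_congr rfl step1, Finset.sum_comm]
  have step2 : ∀ e ∈ X.1.powersetCard 2,
      ∑ Ps ∈ X.1.powersetCard 4,
        (if e ⊆ Ps then (if sbit X e (Ps \ e) then (1 : ZMod 2) else 0) else 0) = 1 := by
    intro e he
    obtain ⟨hesub, he2⟩ := Finset.mem_powersetCard.1 he
    rw [← Finset.sum_filter]
    have himg : (X.1.powersetCard 4).filter (fun Ps => e ⊆ Ps) =
        (X.1 \ e).image (fun p => X.1 \ {p}) := by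
      ext Ps
      simp only [Finset.mem_filter, Finset.mem_powersetCard, Finset.mem_image,
        Finset.mem_sdiff]
      constructor
      · rintro ⟨⟨hPsub, hP4⟩, heP⟩
        have hc1 : (X.1 \ Ps).card = 1 := by rw [Finset.card_sdiff_of_subset hPsub, h5, hP4]
        obtain ⟨p, hp⟩ := Finset.card_eq_one.1 hc1
        have hpmem : p ∈ X.1 \ Ps := hp ▸ Finset.mem_singleton_self p
        have hpX : p ∈ X.1 := (Finset.mem_sdiff.1 hpmem).1
        have hpPs : p ∉ Ps := (Finset.mem_sdiff.1 hpmem).2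
        refine ⟨p, ⟨hpX, fun hpd => hpPs (heP hpd)⟩, ?_⟩
        have hPsub2 : Ps ⊆ X.1 \ {p} :=
          Finset.subset_sdiff.2 ⟨hPsub, by simp [hpPs]⟩
        have hc4 : (X.1 \ {p}).card = 4 := by
          rw [Finset.card_sdiff_of_subset (by simpa using hpX), h5, Finset.card_singleton]
        exact (Finset.eq_of_subset_of_card_le hPsub2 (by omega)).symm
      · rintro ⟨p, ⟨hpX, hpe⟩, rfl⟩
        have hc4 : (X.1 \ {p}).card = 4 := by
          rw [Finset.card_sdiff_of_subset (by simpa using hpX), h5, Finset.card_singleton]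
        exact ⟨⟨Finset.sdiff_subset, hc4⟩,
          Finset.subset_sdiff.2 ⟨hesub, by simp [hpe]⟩⟩
    rw [himg, Finset.sum_image ?_]
    · exact divider_odd hX h5 hesub he2
    · intro p hp q hq hpq
      by_contra hne
      have h1 : p ∉ X.1 \ {p} := by simp
      rw [show X.1 \ {p} = X.1 \ {q} from hpq] at h1
      simp only [Finset.mem_sdiff, Finset.mem_singleton, not_and, not_not] at h1
      exact hne (h1 ((Finset.mem_sdiff.1 hp).1))
  rw [Finset.sum_congr rfl step2, Finset.sum_const, Finset.card_powersetCard, h5]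
  show (Nat.choose 5 2) • (1 : ZMod 2) = 0
  rw [nsmul_eq_mul]
  decide

lemma even_tri_count {X : PreDPS} (hX : DPSplus X) (h5 : X.1.card = 5) :
    Even (((X.1.powersetCard 4).filter
      (fun Ps => Isom (restr X Ps) Conc41)).card) := by
  have key : ∀ Ps ∈ X.1.powersetCard 4,
      ∑ e ∈ Ps.powersetCard 2, (if sbit X e (Ps \ e) then (1 : ZMod 2) else 0)
      = (if Isom (restr X Ps) Conc41 then (1 : ZMod 2) else 0) := by
    intro Ps hPs
    obtain ⟨hsub, h4⟩ := Finset.mem_powersetCard.1 hPs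
    rcases tri_or_cnv hX hsub h4 with ht | hc
    · rw [quad_sum_tri ht, if_pos (isom_conc ht)]
    · rw [quad_sum_cnv hc, if_neg (not_isom_conc hc)]
  have h0 := total_sum hX.1 h5
  rw [Finset.sum_congr rfl key, Finset.sum_boole] at h0
  have hdvd := (ZMod.natCast_eq_zero_iff _ 2).1 h0
  exact even_iff_two_dvd.2 hdvd

end Total

/-- Theorem 2: every div point set of 5 points in DPS⁺ has exactly 0, 2 or 4 sub div
point sets of 4 points isomorphic to Conc₄¹, the remaining ones being isomorphic to Conv₄. -/
theorem stmt_1 (X : PreDPS) (hX : DPSplus X) (h5 : X.1.card = 5) :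
    (Set.ncard {Y : PreDPS | ∃ Ps, Ps.card = 4 ∧ IsSdps X Ps Y ∧ Isom Y Conc41} = 0 ∨
     Set.ncard {Y : PreDPS | ∃ Ps, Ps.card = 4 ∧ IsSdps X Ps Y ∧ Isom Y Conc41} = 2 ∨
     Set.ncard {Y : PreDPS | ∃ Ps, Ps.card = 4 ∧ IsSdps X Ps Y ∧ Isom Y Conc41} = 4) ∧
    ∀ Ps Y, Ps.card = 4 → IsSdps X Ps Y → ¬ Isom Y Conc41 → Isom Y Conv4 := by
  have hdps := hX.1
  constructor
  · set F := (X.1.powersetCard 4).filter (fun Ps => Isom (restr X Ps) Conc41) with hF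
    have hSeq : {Y : PreDPS | ∃ Ps, Ps.card = 4 ∧ IsSdps X Ps Y ∧ Isom Y Conc41}
        = (fun Ps => restr X Ps) '' ↑F := by
      ext Y
      simp only [Set.mem_setOf_eq, Set.mem_image, Finset.coe_filter, Set.mem_setOf_eq,
        Finset.mem_coe]
      constructor
      · rintro ⟨Ps, h4, hsd, hiso⟩
        have hYeq := isSdps_unique hdps h4 hsd
        refine ⟨Ps, ?_, hYeq.symm⟩
        rw [hF, Finset.mem_filter]
        exact ⟨Finset.mem_powersetCard.2 ⟨hsd.1, h4⟩, hYeq ▸ hiso⟩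
      · rintro ⟨Ps, hPsF, rfl⟩
        rw [hF, Finset.mem_filter, Finset.mem_powersetCard] at hPsF
        obtain ⟨⟨hsub, h4⟩, hiso⟩ := hPsF
        exact ⟨Ps, h4, isSdps_restr hdps hsub h4, hiso⟩
    rw [hSeq, Set.ncard_image_of_injOn (fun P1 _ P2 _ h => by
        have := congrArg Prod.fst h
        simpa [restr_fst] using this), Set.ncard_coe_finset]
    have hle : F.card ≤ 5 := by
      have h1 : F.card ≤ (X.1.powersetCard 4).card := Finset.card_filter_le _ _
      rwa [Finset.card_powersetCard, h5] at h1
    obtain ⟨k, hk⟩ := even_tri_count hX h5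
    rw [← hF] at hk
    omega
  · intro Ps Y h4 hsd hniso
    have hYeq := isSdps_unique hdps h4 hsd
    rcases tri_or_cnv hX hsd.1 h4 with ht | hc
    · exact absurd (hYeq ▸ isom_conc ht) hniso
    · exact hYeq ▸ isom_conv hc
end

section
/- The map F_udps, regarded as a map from the class of div point sets with at least 4 points to the class of unit div point sets, is injective (Lemma 1, injectivity). -/
open Finset

/-- The second component of a unit dividon produced by `Fudps`. -/
def uval (δ : Finset (Finset ℕ)) (T : Finset ℕ) : Finset (Finset ℕ) :=
  if ∃ dv ∈ δ, T ⊆ dv then ({T, ∅} : Finset (Finset ℕ))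
  else T.image fun a => ({a} : Finset ℕ)

lemma uval_inj {T T' : Finset ℕ} (hT : T.card = 2) (hT' : T'.card = 2)
    {δ δ' : Finset (Finset ℕ)} (h : uval δ T = uval δ' T') :
    T = T' ∧ ((∃ dv ∈ δ, T ⊆ dv) ↔ ∃ dv ∈ δ', T' ⊆ dv) := by
  unfold uval at h
  have hTne : T ≠ (∅ : Finset ℕ) := by
    intro hT0; rw [hT0] at hT; simp at hT
  have hT'ne : T' ≠ (∅ : Finset ℕ) := by
    intro hT0; rw [hT0] at hT'; simp at hT'
  by_cases h1 : ∃ dv ∈ δ, T ⊆ dv <;> by_cases h2 : ∃ dv ∈ δ', T' ⊆ dv <;>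
    simp only [h1, h2, if_pos, if_neg, if_true, if_false] at h
  · -- both true : {T,∅} = {T',∅}
    have hmem : T ∈ ({T', ∅} : Finset (Finset ℕ)) := by
      rw [← h]; simp
    simp only [Finset.mem_insert, Finset.mem_singleton] at hmem
    rcases hmem with h' | h'
    · exact ⟨h', by simp [h1, h2]⟩
    · exact absurd h' hTne
  · -- {T,∅} = image singleton: ∅ is in LHS but not RHS
    exfalso
    have : (∅ : Finset ℕ) ∈ T'.image fun a => ({a} : Finset ℕ) := by
      rw [← h]; simp
    simp only [Finset.mem_image] at this
    obtain ⟨a, -, ha⟩ := this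
    exact (Finset.singleton_ne_empty a) ha
  · exfalso
    have : (∅ : Finset ℕ) ∈ T.image fun a => ({a} : Finset ℕ) := by
      rw [h]; simp
    simp only [Finset.mem_image] at this
    obtain ⟨a, -, ha⟩ := this
    exact (Finset.singleton_ne_empty a) ha
  · -- both false : images of singleton map equal
    have hinj : Function.Injective fun a : ℕ => ({a} : Finset ℕ) := fun a b hab => by
      simpa using hab
    exact ⟨Finset.image_injective hinj h, by simp [h1, h2]⟩

lemma div_class_eq {P d A B : Finset ℕ} (hUB : A ∪ B = P \ d) (hI : A ∩ B = ∅)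
    {x : ℕ} (hx : x ∈ A) :
    A = (P \ d).filter
      (fun y => y = x ∨ ∃ dv ∈ ({A, B} : Finset (Finset ℕ)), ({x, y} : Finset ℕ) ⊆ dv) := by
  ext y
  simp only [Finset.mem_filter, Finset.mem_insert, Finset.mem_singleton]
  constructor
  · intro hy
    refine ⟨by rw [← hUB]; exact Finset.mem_union_left _ hy, ?_⟩
    right
    exact ⟨A, Or.inl rfl, by
      intro z hz
      simp only [Finset.mem_insert, Finset.mem_singleton] at hz
      rcases hz with rfl | rfl
      · exact hx
      · exact hy⟩
  · rintro ⟨-, rfl | ⟨dv, hdv, hsub⟩⟩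
    · exact hx
    · have hxB : x ∉ B := fun hxB =>
        (Finset.notMem_empty x) (hI ▸ Finset.mem_inter.mpr ⟨hx, hxB⟩)
      rcases hdv with rfl | rfl
      · exact hsub (by simp)
      · exact absurd (hsub (by simp)) hxB

lemma delta_unique {P d : Finset ℕ} (hPd : 2 ≤ (P \ d).card)
    {δ δ' : Finset (Finset ℕ)}
    (h1 : ∃ A B : Finset ℕ, A ≠ B ∧ δ = {A, B} ∧ A ∪ B = P \ d ∧ A ∩ B = ∅)
    (h2 : ∃ A B : Finset ℕ, A ≠ B ∧ δ' = {A, B} ∧ A ∪ B = P \ d ∧ A ∩ B = ∅)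
    (hrel : ∀ T ⊆ P \ d, T.card = 2 → ((∃ dv ∈ δ, T ⊆ dv) ↔ ∃ dv ∈ δ', T ⊆ dv)) :
    δ = δ' := by
  obtain ⟨A, B, hAB, hδ, hUB, hI⟩ := h1
  obtain ⟨A', B', hAB', hδ', hUB', hI'⟩ := h2
  -- pick a point x ∈ P \ d
  obtain ⟨x, hxPd⟩ : (P \ d).Nonempty := Finset.card_pos.mp (by omega)
  -- rel and rel' agree
  have hreleq : ∀ y ∈ P \ d,
      ((∃ dv ∈ δ, ({x, y} : Finset ℕ) ⊆ dv) ↔ ∃ dv ∈ δ', ({x, y} : Finset ℕ) ⊆ dv)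
      ∨ y = x := by
    intro y hy
    by_cases hxy : y = x
    · exact Or.inr hxy
    · left
      apply hrel
      · intro z hz
        simp only [Finset.mem_insert, Finset.mem_singleton] at hz
        rcases hz with rfl | rfl
        · exact hxPd
        · exact hy
      · exact Finset.card_pair (fun h => hxy h.symm)
  have key : ∀ (C D : Finset ℕ), C ≠ D → C ∪ D = P \ d → C ∩ D = ∅ → x ∈ C →
      ({C, D} : Finset (Finset ℕ)) =
        {(P \ d).filter (fun y => y = x ∨ ∃ dv ∈ ({C, D} : Finset (Finset ℕ)),
            ({x, y} : Finset ℕ) ⊆ dv),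
         (P \ d) \ (P \ d).filter (fun y => y = x ∨ ∃ dv ∈ ({C, D} : Finset (Finset ℕ)),
            ({x, y} : Finset ℕ) ⊆ dv)} := by
    intro C D hCD hU hIn hxC
    have hC := div_class_eq hU hIn hxC
    have hD : D = (P \ d) \ C := by
      ext y
      constructor
      · intro hy
        refine Finset.mem_sdiff.mpr ⟨?_, fun hyC => ?_⟩
        · rw [← hU]; exact Finset.mem_union_right _ hy
        · exact (Finset.notMem_empty y) (hIn ▸ Finset.mem_inter.mpr ⟨hyC, hy⟩)
      · intro hy
        obtain ⟨hy1, hyC⟩ := Finset.mem_sdiff.mp hy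
        rw [← hU] at hy1
        rcases Finset.mem_union.mp hy1 with h' | h'
        · exact absurd h' hyC
        · exact h'
    rw [← hC, ← hD]
  -- x is in A or B; in either case rewrite δ using the filter form
  have hmain : ∀ (C D : Finset ℕ), C ≠ D → C ∪ D = P \ d → C ∩ D = ∅ →
      ({C, D} : Finset (Finset ℕ)) = δ → x ∈ C ∪ D → δ = δ' := by
    intro C D hCD hU hIn hδeq hxCD
    -- same for δ'
    have hx' : x ∈ A' ∪ B' := by rw [hUB']; exact hxPd
    have filter_eq : (P \ d).filter (fun y => y = x ∨ ∃ dv ∈ δ, ({x, y} : Finset ℕ) ⊆ dv)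
        = (P \ d).filter (fun y => y = x ∨ ∃ dv ∈ δ', ({x, y} : Finset ℕ) ⊆ dv) := by
      apply Finset.filter_congr
      intro y hy
      rcases hreleq y hy with h' | h'
      · simp [h']
      · simp [h']
    rcases Finset.mem_union.mp hxCD with hxC | hxD
    · have e1 := key C D hCD hU hIn hxC
      rw [hδeq] at e1
      rcases Finset.mem_union.mp hx' with hxA' | hxB'
      · have e2 := key A' B' hAB' hUB' hI' hxA'
        rw [← hδ'] at e2
        rw [e1, e2, filter_eq]
      · have e2 := key B' A' (Ne.symm hAB') (by rw [Finset.union_comm]; exact hUB')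
          (by rw [Finset.inter_comm]; exact hI') hxB'
        have hδ'2 : δ' = {B', A'} := by rw [hδ']; exact Finset.pair_comm A' B'
        rw [← hδ'2] at e2
        rw [e1, e2, filter_eq]
    · have e1 := key D C (Ne.symm hCD) (by rw [Finset.union_comm]; exact hU)
        (by rw [Finset.inter_comm]; exact hIn) hxD
      have hδ2 : δ = {D, C} := by rw [← hδeq]; exact Finset.pair_comm C D
      rw [← hδ2] at e1
      rcases Finset.mem_union.mp hx' with hxA' | hxB'
      · have e2 := key A' B' hAB' hUB' hI' hxA'
        rw [← hδ'] at e2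
        rw [e1, e2, filter_eq]
      · have e2 := key B' A' (Ne.symm hAB') (by rw [Finset.union_comm]; exact hUB')
          (by rw [Finset.inter_comm]; exact hI') hxB'
        have hδ'2 : δ' = {B', A'} := by rw [hδ']; exact Finset.pair_comm A' B'
        rw [← hδ'2] at e2
        rw [e1, e2, filter_eq]
  exact hmain A B hAB hUB hI hδ.symm (by rw [hUB]; exact hxPd)

/-- Lemma 1 (injectivity): `F_udps` is injective on div point sets of at least 4 points. -/
theorem stmt_2 (X Y : PreDPS) (hX : IsDPS X) (hY : IsDPS Y)
    (h4X : 4 ≤ X.1.card) (h4Y : 4 ≤ Y.1.card) (h : Fudps X = Fudps Y) :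
    X = Y := by
  have hP : X.1 = Y.1 := by
    have := congrArg Prod.fst h
    simpa only [Fudps] using this
  have hΩ : (Fudps X).2 = (Fudps Y).2 := by rw [h]
  obtain ⟨-, hXcard, hXdiv, hXuniq⟩ := hX
  obtain ⟨-, hYcard, hYdiv, hYuniq⟩ := hY
  -- membership characterization
  have memΩ : ∀ (Z : PreDPS) (u : Dividon),
      u ∈ (Fudps Z).2 ↔ ∃ D ∈ Z.2, ∃ T, T ⊆ Z.1 \ D.1 ∧ T.card = 2 ∧
        u = (D.1, uval D.2 T) := by
    intro Z u
    simp only [Fudps, Finset.mem_biUnion, Finset.mem_image, Finset.mem_powersetCard]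
    constructor
    · rintro ⟨D, hD, T, ⟨hT1, hT2⟩, hu⟩
      exact ⟨D, hD, T, hT1, hT2, hu.symm⟩
    · rintro ⟨D, hD, T, hT1, hT2, hu⟩
      exact ⟨D, hD, T, ⟨hT1, hT2⟩, hu.symm⟩
  -- X.2 ⊆ Y.2
  have hsub : X.2 ⊆ Y.2 := by
    intro D hD
    obtain ⟨hd2, hdP, hδstr⟩ := hXdiv D hD
    have hcardPd : 2 ≤ (X.1 \ D.1).card := by
      rw [Finset.card_sdiff_of_subset hdP, hd2]; omega
    obtain ⟨T0, hT0sub, hT0card⟩ := Finset.exists_subset_card_eq hcardPd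
    -- the companion dividon D' in Y.2
    have hu0 : (D.1, uval D.2 T0) ∈ (Fudps Y).2 := by
      rw [← hΩ, memΩ]; exact ⟨D, hD, T0, hT0sub, hT0card, rfl⟩
    rw [memΩ] at hu0
    obtain ⟨D', hD', T', hT'sub, hT'card, hu0eq⟩ := hu0
    have hd' : D'.1 = D.1 := (congrArg Prod.fst hu0eq).symm
    -- relation equality on all 2-subsets T of X.1 \ D.1
    have hrel : ∀ T ⊆ X.1 \ D.1, T.card = 2 →
        ((∃ dv ∈ D.2, T ⊆ dv) ↔ ∃ dv ∈ D'.2, T ⊆ dv) := by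
      intro T hTsub hTcard
      have hu : (D.1, uval D.2 T) ∈ (Fudps Y).2 := by
        rw [← hΩ, memΩ]; exact ⟨D, hD, T, hTsub, hTcard, rfl⟩
      rw [memΩ] at hu
      obtain ⟨D'', hD'', T'', hT''sub, hT''card, hueq⟩ := hu
      have hd'' : D''.1 = D.1 := (congrArg Prod.fst hueq).symm
      have : D'' = D' := hYuniq D'' hD'' D' hD' (by rw [hd'', hd'])
      subst this
      have hval : uval D.2 T = uval D''.2 T'' := congrArg Prod.snd hueq
      obtain ⟨hTT, hiff⟩ := uval_inj hTcard hT''card hval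
      rw [← hTT] at hiff
      exact hiff
    -- D'.2 structure over Y.1
    obtain ⟨hd2', hdP', hδstr'⟩ := hYdiv D' hD'
    rw [hd'] at hδstr'
    rw [← hP] at hδstr'
    have hδeq : D.2 = D'.2 := delta_unique hcardPd hδstr hδstr' hrel
    have : D = D' := Prod.ext hd'.symm hδeq
    rw [this]; exact hD'
  -- conclude X.2 = Y.2 by cardinality
  have hcard : Y.2.card ≤ X.2.card := by
    rw [hXcard, hYcard, hP]
  have hseq : X.2 = Y.2 := Finset.eq_of_subset_of_card_le hsub hcard
  exact Prod.ext hP hseq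
end

section
/- For every div point set X with at least 4 points, the unit div point set F_udps(X) satisfies: for all distinct unit dividons D₁, D₂, D₃ of F_udps(X) with π₁(D₁) = π₁(D₂) = π₁(D₃) and |⋃π₂(D₁) ∪ ⋃π₂(D₂) ∪ ⋃π₂(D₃)| = 3, one has ψ(π₂(D₁)) = 1 iff ψ(π₂(D₂)) = ψ(π₂(D₃)), and ψ(π₂(D₁)) = 0 iff ψ(π₂(D₂)) ≠ ψ(π₂(D₃)). -/
open Finset

lemma unionOf_ite (T : Finset ℕ) (c : Prop) [Decidable c] :
    unionOf (if c then ({T, ∅} : Finset (Finset ℕ)) else T.image fun a => {a}) = T := by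
  split
  · simp [unionOf]
  · ext x
    simp [unionOf, Finset.mem_sup]

lemma psi_ite (T : Finset ℕ) (hT : T.card = 2) (c : Prop) [Decidable c] :
    psi (if c then ({T, ∅} : Finset (Finset ℕ)) else T.image fun a => {a}) =
      if c then 1 else 0 := by
  split
  · simp only [psi, if_pos]
    rw [if_pos]
    exact ⟨T, by simp, hT⟩
  · simp only [psi]
    rw [if_neg]
    rintro ⟨dv, hdv, hc⟩
    simp only [Finset.mem_image] at hdv
    obtain ⟨a, _, rfl⟩ := hdv
    simp at hc

lemma cond_iff (A B : Finset ℕ) (hI : A ∩ B = ∅) (x y : ℕ)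
    (hx : x ∈ A ∪ B) (hy : y ∈ A ∪ B) :
    (∃ dv ∈ ({A, B} : Finset (Finset ℕ)), ({x, y} : Finset ℕ) ⊆ dv) ↔ (x ∈ A ↔ y ∈ A) := by
  have hAB : ∀ z, z ∈ A → z ∈ B → False := fun z hzA hzB => by
    have : z ∈ A ∩ B := Finset.mem_inter.mpr ⟨hzA, hzB⟩
    simp [hI] at this
  simp only [Finset.mem_insert, Finset.mem_singleton, Finset.insert_subset_iff,
    Finset.singleton_subset_iff, Finset.mem_union] at *
  constructor
  · rintro ⟨dv, (rfl | rfl), hx', hy'⟩ <;> tauto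
  · intro h
    rcases hx with hx | hx <;> rcases hy with hy | hy
    · exact ⟨A, Or.inl rfl, hx, hy⟩
    · exact absurd (h.mp hx) (fun h' => hAB y h' hy)
    · exact absurd (h.mpr hy) (fun h' => hAB x h' hx)
    · exact ⟨B, Or.inr rfl, hx, hy⟩

lemma pair_cases_s4 (a b c : ℕ) (T : Finset ℕ) (hT : T ⊆ ({a, b, c} : Finset ℕ))
    (hc : T.card = 2) :
    T = {a, b} ∨ T = {a, c} ∨ T = {b, c} := by
  obtain ⟨x, y, hxy, rfl⟩ := Finset.card_eq_two.mp hc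
  have hx := hT (Finset.mem_insert_self x {y})
  have hy := hT (Finset.mem_insert_of_mem (Finset.mem_singleton_self y))
  simp only [Finset.mem_insert, Finset.mem_singleton] at hx hy
  rcases hx with rfl | rfl | rfl <;> rcases hy with rfl | rfl | rfl <;>
    simp_all [Finset.pair_comm]

/-- For every div point set `X` of at least 4 points, `F_udps X` satisfies:
for all distinct unit dividons `D₁, D₂, D₃` with the same divider whose TBD points
together form a 3-element set, `ψ(π₂(D₁)) = 1 ↔ ψ(π₂(D₂)) = ψ(π₂(D₃))` and
`ψ(π₂(D₁)) = 0 ↔ ψ(π₂(D₂)) ≠ ψ(π₂(D₃))`. -/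
theorem stmt_4 (X : PreDPS) (hX : IsDPS X) (h4 : 4 ≤ X.1.card) :
    ∀ D₁ ∈ (Fudps X).2, ∀ D₂ ∈ (Fudps X).2, ∀ D₃ ∈ (Fudps X).2,
      D₁ ≠ D₂ → D₁ ≠ D₃ → D₂ ≠ D₃ →
      D₁.1 = D₂.1 → D₂.1 = D₃.1 →
      (unionOf D₁.2 ∪ unionOf D₂.2 ∪ unionOf D₃.2).card = 3 →
      (psi D₁.2 = 1 ↔ psi D₂.2 = psi D₃.2) ∧
      (psi D₁.2 = 0 ↔ psi D₂.2 ≠ psi D₃.2) := by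
  obtain ⟨hne, hcardΘ, hdiv, huniq⟩ := hX
  rintro D₁ h1 D₂ h2 D₃ h3 h12 h13 h23 e12 e23 hcard
  simp only [Fudps, Finset.mem_biUnion, Finset.mem_image, Finset.mem_powersetCard] at h1 h2 h3
  obtain ⟨E₁, hE₁, T₁, ⟨hT₁s, hT₁c⟩, rfl⟩ := h1
  obtain ⟨E₂, hE₂, T₂, ⟨hT₂s, hT₂c⟩, rfl⟩ := h2
  obtain ⟨E₃, hE₃, T₃, ⟨hT₃s, hT₃c⟩, rfl⟩ := h3
  simp only at e12 e23 hcard h12 h13 h23 ⊢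
  have hE12 : E₁ = E₂ := huniq _ hE₁ _ hE₂ e12
  have hE13 : E₁ = E₃ := huniq _ hE₁ _ hE₃ (e12.trans e23)
  subst hE12
  subst hE13
  have hT12 : T₁ ≠ T₂ := fun h => h12 (by rw [h])
  have hT13 : T₁ ≠ T₃ := fun h => h13 (by rw [h])
  have hT23 : T₂ ≠ T₃ := fun h => h23 (by rw [h])
  rw [unionOf_ite, unionOf_ite, unionOf_ite] at hcard
  obtain ⟨hd2, hdP, A, B, hABne, hδ, hU, hI⟩ := hdiv E₁ hE₁
  rw [← hU] at hT₁s hT₂s hT₃s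
  obtain ⟨a, b, c, hab, hac, hbc, hS⟩ := Finset.card_eq_three.mp hcard
  have hSsub : ({a, b, c} : Finset ℕ) ⊆ A ∪ B := by
    rw [← hS]
    exact Finset.union_subset (Finset.union_subset hT₁s hT₂s) hT₃s
  have haM : a ∈ A ∪ B := hSsub (by simp)
  have hbM : b ∈ A ∪ B := hSsub (by simp)
  have hcM : c ∈ A ∪ B := hSsub (by simp)
  have hP₁ := pair_cases_s4 a b c T₁ (hS ▸ Finset.subset_union_left.trans Finset.subset_union_left) hT₁c
  have hP₂ := pair_cases_s4 a b c T₂ (hS ▸ Finset.subset_union_right.trans Finset.subset_union_left) hT₂c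
  have hP₃ := pair_cases_s4 a b c T₃ (hS ▸ Finset.subset_union_right) hT₃c
  rw [psi_ite T₁ hT₁c, psi_ite T₂ hT₂c, psi_ite T₃ hT₃c, hδ]
  rcases hP₁ with rfl | rfl | rfl <;> rcases hP₂ with rfl | rfl | rfl <;>
    rcases hP₃ with rfl | rfl | rfl <;>
    first
      | exact absurd rfl hT12
      | exact absurd rfl hT13
      | exact absurd rfl hT23
      | (simp only [cond_iff A B hI a b haM hbM, cond_iff A B hI a c haM hcM,
          cond_iff A B hI b c hbM hcM]
         by_cases ha : a ∈ A <;> by_cases hb : b ∈ A <;> by_cases hc' : c ∈ A <;>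
           simp [ha, hb, hc'])
end

section
/- A div point set X with at least 4 points satisfies laws (L1), (L2), (L3) (i.e., X ∈ DPS⁺) if and only if the unit div point set F_udps(X) satisfies laws (U1), (U2), (U3) (i.e., F_udps(X) ∈ UDPS⁺) (Lemma 2). -/
open Finset

/-- Auxiliary: the unit dividon built from a dividon `D` and a 2-set `T`. -/
def mkE (D : Dividon) (T : Finset ℕ) : Dividon :=
  (D.1, if ∃ dv ∈ D.2, T ⊆ dv then ({T, ∅} : Finset (Finset ℕ))
        else T.image fun a => ({a} : Finset ℕ))

lemma mem_Fudps_s5 {X : PreDPS} {E : Dividon} :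
    E ∈ (Fudps X).2 ↔ ∃ D ∈ X.2, ∃ T, T ⊆ X.1 \ D.1 ∧ T.card = 2 ∧ E = mkE D T := by
  simp only [Fudps, mem_biUnion, mem_image, mem_powersetCard, mkE]
  constructor
  · rintro ⟨D, hD, T, ⟨h1, h2⟩, rfl⟩
    exact ⟨D, hD, T, h1, h2, rfl⟩
  · rintro ⟨D, hD, T, h1, h2, rfl⟩
    exact ⟨D, hD, T, ⟨h1, h2⟩, rfl⟩

lemma unionOf_mkE (D : Dividon) (T : Finset ℕ) : unionOf (mkE D T).2 = T := by
  unfold mkE unionOf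
  split
  · simp
  · ext a
    simp [Finset.mem_sup]

lemma xi_mkE (D : Dividon) (T : Finset ℕ) : xi (mkE D T) = D.1 ∪ T := by
  rw [xi, unionOf_mkE]; rfl

lemma psi_mkE (D : Dividon) {T : Finset ℕ} (hT : T.card = 2) :
    psi (mkE D T).2 = phi D.2 T := by
  unfold mkE psi phi
  by_cases h : ∃ dv ∈ D.2, T ⊆ dv
  · rw [if_pos h]
    obtain ⟨dv, hdv, hsub⟩ := h
    rw [if_pos ⟨T, by simp, hT⟩, if_pos ⟨dv, hdv, by rw [Finset.inter_eq_left.2 hsub]; exact hT⟩]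
  · rw [if_neg h, if_neg, if_neg]
    · rintro ⟨dv, hdv, hc⟩
      exact h ⟨dv, hdv, Finset.inter_eq_left.1
        (Finset.eq_of_subset_of_card_le Finset.inter_subset_left (by omega))⟩
    · rintro ⟨dv, hdv, hc⟩
      obtain ⟨a, _, rfl⟩ := Finset.mem_image.1 hdv
      simp at hc

lemma pair_lemma {R d e : Finset ℕ} (hR : R.card = 4) (hd : d.card = 2) (he : e.card = 2)
    (hun : d ∪ e = R) (hint : (d ∩ e).Nonempty) : False := by
  have h := Finset.card_union_add_card_inter d e
  have hle : 1 ≤ (d ∩ e).card := Finset.card_pos.2 hint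
  rw [hun] at h
  omega

lemma dividers_ne {R d₁ d₂ d₃ : Finset ℕ} (hR : R.card = 4)
    (c₁ : d₁.card = 2) (c₂ : d₂.card = 2) (c₃ : d₃.card = 2)
    (hun : d₁ ∪ d₂ ∪ d₃ = R) (hint : (d₁ ∩ d₂ ∩ d₃).card = 1) :
    d₁ ≠ d₂ ∧ d₁ ≠ d₃ ∧ d₂ ≠ d₃ := by
  refine ⟨?_, ?_, ?_⟩ <;> intro h
  · subst h
    rw [union_self] at hun
    rw [inter_self] at hint
    exact pair_lemma hR c₁ c₃ hun (Finset.card_pos.1 (by omega))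
  · subst h
    have hun' : d₁ ∪ d₂ = R := by
      rw [← hun]; ext a; simp; tauto
    exact pair_lemma hR c₁ c₂ hun'
      ((Finset.card_pos.1 (by omega) : (d₁ ∩ d₂ ∩ d₁).Nonempty).mono inter_subset_left)
  · subst h
    rw [union_assoc, union_self] at hun
    rw [inter_assoc, inter_self] at hint
    exact pair_lemma hR c₁ c₂ hun (Finset.card_pos.1 (by omega))

lemma pair_of_mem {d : Finset ℕ} (hc : d.card = 2) {x : ℕ} (hx : x ∈ d) :
    ∃ y, y ≠ x ∧ d = {x, y} := by
  obtain ⟨a, b, hab, rfl⟩ := Finset.card_eq_two.1 hc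
  simp only [mem_insert, mem_singleton] at hx
  rcases hx with rfl | rfl
  · exact ⟨b, fun h => hab h.symm, rfl⟩
  · exact ⟨a, fun h => hab h, by rw [pair_comm]⟩

lemma union_eq_of_three {R d₁ d₂ d₃ : Finset ℕ} (hR : R.card = 4)
    (h₁ : d₁ ⊆ R) (h₂ : d₂ ⊆ R) (h₃ : d₃ ⊆ R)
    (c₁ : d₁.card = 2) (c₂ : d₂.card = 2) (c₃ : d₃.card = 2)
    (n₁₂ : d₁ ≠ d₂) (n₁₃ : d₁ ≠ d₃) (n₂₃ : d₂ ≠ d₃)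
    (hint : (d₁ ∩ d₂ ∩ d₃).card = 1) : d₁ ∪ d₂ ∪ d₃ = R := by
  obtain ⟨x, hx⟩ := Finset.card_eq_one.1 hint
  have hx1 : x ∈ d₁ ∧ x ∈ d₂ ∧ x ∈ d₃ := by
    have : x ∈ d₁ ∩ d₂ ∩ d₃ := hx ▸ mem_singleton_self x
    simp only [mem_inter] at this
    tauto
  obtain ⟨y₁, hy₁, e₁⟩ := pair_of_mem c₁ hx1.1
  obtain ⟨y₂, hy₂, e₂⟩ := pair_of_mem c₂ hx1.2.1
  obtain ⟨y₃, hy₃, e₃⟩ := pair_of_mem c₃ hx1.2.2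
  subst e₁; subst e₂; subst e₃
  have hy12 : y₁ ≠ y₂ := fun h => n₁₂ (by rw [h])
  have hy13 : y₁ ≠ y₃ := fun h => n₁₃ (by rw [h])
  have hy23 : y₂ ≠ y₃ := fun h => n₂₃ (by rw [h])
  have hu : ({x, y₁} ∪ {x, y₂} ∪ {x, y₃} : Finset ℕ) = {x, y₁, y₂, y₃} := by
    ext a
    simp only [mem_union, mem_insert, mem_singleton]
    tauto
  have hc4 : ({x, y₁, y₂, y₃} : Finset ℕ).card = 4 := by
    rw [Finset.card_insert_of_notMem (by simp [Ne.symm hy₁, Ne.symm hy₂, Ne.symm hy₃]),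
        Finset.card_insert_of_notMem (by simp [hy12, hy13]),
        Finset.card_insert_of_notMem (by simp [hy23]), Finset.card_singleton]
  refine Finset.eq_of_subset_of_card_le (Finset.union_subset (Finset.union_subset h₁ h₂) h₃) ?_
  rw [hu, hc4, hR]

lemma T_eq {R d T : Finset ℕ} (hdisj : Disjoint d T) (hun : d ∪ T = R) : R \ d = T := by
  rw [← hun, Finset.union_sdiff_cancel_left hdisj]

lemma analyze {X : PreDPS} {E : Dividon} {R : Finset ℕ}
    (hE : E ∈ (Fudps X).2) (hxi : xi E = R) :
    ∃ D ∈ X.2, E = mkE D (R \ D.1) ∧ (R \ D.1).card = 2 ∧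
      psi E.2 = phi D.2 (R \ D.1) := by
  obtain ⟨D, hD, T, hTs, hTc, rfl⟩ := mem_Fudps_s5.1 hE
  have hdisj : Disjoint D.1 T := ((Finset.subset_sdiff.1 hTs).2).symm
  rw [xi_mkE] at hxi
  have hT : R \ D.1 = T := T_eq hdisj hxi
  exact ⟨D, hD, by rw [hT], by rw [hT]; exact hTc, by rw [hT]; exact psi_mkE D hTc⟩

lemma synth {X : PreDPS} (hX : IsDPS X) {D : Dividon} {R : Finset ℕ}
    (hD : D ∈ X.2) (hR : R ⊆ X.1) (hR4 : R.card = 4) (hdR : D.1 ⊆ R) :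
    mkE D (R \ D.1) ∈ (Fudps X).2 ∧ xi (mkE D (R \ D.1)) = R ∧
      psi (mkE D (R \ D.1)).2 = phi D.2 (R \ D.1) := by
  have hc2 : D.1.card = 2 := (hX.2.2.1 D hD).1
  have hcard : (R \ D.1).card = 2 := by rw [Finset.card_sdiff_of_subset hdR, hR4, hc2]
  have hsub : R \ D.1 ⊆ X.1 \ D.1 := Finset.sdiff_subset_sdiff hR (le_refl _)
  refine ⟨mem_Fudps_s5.2 ⟨D, hD, _, hsub, hcard, rfl⟩, ?_, psi_mkE D hcard⟩
  rw [xi_mkE, Finset.union_sdiff_of_subset hdR]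

/-- Lemma 2: a div point set `X` with at least 4 points satisfies (L1), (L2), (L3)
(i.e. `X ∈ DPS⁺`) iff `F_udps X` satisfies (U1), (U2), (U3) (i.e. `F_udps X ∈ UDPS⁺`). -/
theorem stmt_5 (X : PreDPS) (hX : IsDPS X) (h4 : 4 ≤ X.1.card) :
    LawsDPS X ↔ LawsUDPS (Fudps X) := by
  have huniq := hX.2.2.2
  have hcard2 : ∀ D ∈ X.2, D.1.card = 2 := fun D hD => (hX.2.2.1 D hD).1
  constructor
  · intro hL
    refine ⟨?_, ?_, ?_⟩
    · -- U1
      intro R hR hR4 E₁ hE₁ E₂ hE₂ E₃ hE₃ h12 h13 h23 hx1 hx2 hx3 hint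
      obtain ⟨D₁, hD₁, rfl, hTc₁, hp₁⟩ := analyze hE₁ hx1
      obtain ⟨D₂, hD₂, rfl, hTc₂, hp₂⟩ := analyze hE₂ hx2
      obtain ⟨D₃, hD₃, rfl, hTc₃, hp₃⟩ := analyze hE₃ hx3
      have hd12 : D₁.1 ≠ D₂.1 := fun h => h12 (by rw [huniq D₁ hD₁ D₂ hD₂ h])
      have hd13 : D₁.1 ≠ D₃.1 := fun h => h13 (by rw [huniq D₁ hD₁ D₃ hD₃ h])
      have hd23 : D₂.1 ≠ D₃.1 := fun h => h23 (by rw [huniq D₂ hD₂ D₃ hD₃ h])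
      rw [xi_mkE] at hx1 hx2 hx3
      have hs1 : D₁.1 ⊆ R := hx1 ▸ Finset.subset_union_left
      have hs2 : D₂.1 ⊆ R := hx2 ▸ Finset.subset_union_left
      have hs3 : D₃.1 ⊆ R := hx3 ▸ Finset.subset_union_left
      have hint' : (D₁.1 ∩ D₂.1 ∩ D₃.1).card = 1 := hint
      have hun := union_eq_of_three hR4 hs1 hs2 hs3 (hcard2 D₁ hD₁) (hcard2 D₂ hD₂)
        (hcard2 D₃ hD₃) hd12 hd13 hd23 hint'
      have := hL.1 R hR hR4 D₁ hD₁ D₂ hD₂ D₃ hD₃ hun hint'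
      rw [hp₁, hp₂, hp₃]
      exact this
    · -- U2
      intro R hR hR4 E₁ hE₁ E₂ hE₂ E₃ hE₃ h12 h13 h23 hx1 hx2 hx3 hint
      obtain ⟨D₁, hD₁, rfl, hTc₁, hp₁⟩ := analyze hE₁ hx1
      obtain ⟨D₂, hD₂, rfl, hTc₂, hp₂⟩ := analyze hE₂ hx2
      obtain ⟨D₃, hD₃, rfl, hTc₃, hp₃⟩ := analyze hE₃ hx3
      have hd12 : D₁.1 ≠ D₂.1 := fun h => h12 (by rw [huniq D₁ hD₁ D₂ hD₂ h])
      have hd13 : D₁.1 ≠ D₃.1 := fun h => h13 (by rw [huniq D₁ hD₁ D₃ hD₃ h])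
      have hd23 : D₂.1 ≠ D₃.1 := fun h => h23 (by rw [huniq D₂ hD₂ D₃ hD₃ h])
      rw [xi_mkE] at hx1 hx2 hx3
      have hs1 : D₁.1 ⊆ R := hx1 ▸ Finset.subset_union_left
      have hs2 : D₂.1 ⊆ R := hx2 ▸ Finset.subset_union_left
      have hs3 : D₃.1 ⊆ R := hx3 ▸ Finset.subset_union_left
      have hint' : (D₁.1 ∩ D₂.1 ∩ D₃.1).card = 1 := hint
      have hun := union_eq_of_three hR4 hs1 hs2 hs3 (hcard2 D₁ hD₁) (hcard2 D₂ hD₂)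
        (hcard2 D₃ hD₃) hd12 hd13 hd23 hint'
      have := hL.2.1 R hR hR4 D₁ hD₁ D₂ hD₂ D₃ hD₃ hun hint'
      rw [hp₁, hp₂, hp₃]
      exact this
    · -- U3
      intro R hR hR4 E₁ hE₁ E₂ hE₂ E₃ hE₃ h12 h13 h23 hx1 hx2 hx3 hcard3 hψ₁ hψ₂
      obtain ⟨D₁, hD₁, rfl, hTc₁, hp₁⟩ := analyze hE₁ hx1
      obtain ⟨D₂, hD₂, rfl, hTc₂, hp₂⟩ := analyze hE₂ hx2
      obtain ⟨D₃, hD₃, rfl, hTc₃, hp₃⟩ := analyze hE₃ hx3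
      have hD12 : D₁ ≠ D₂ := fun h => h12 (by rw [h])
      have hD13 : D₁ ≠ D₃ := fun h => h13 (by rw [h])
      have hD23 : D₂ ≠ D₃ := fun h => h23 (by rw [h])
      rw [xi_mkE] at hx1 hx2 hx3
      have hs1 : D₁.1 ⊆ R := hx1 ▸ Finset.subset_union_left
      have hs2 : D₂.1 ⊆ R := hx2 ▸ Finset.subset_union_left
      have hs3 : D₃.1 ⊆ R := hx3 ▸ Finset.subset_union_left
      have hsub : D₁.1 ∪ D₂.1 ∪ D₃.1 ⊆ R :=
        Finset.union_subset (Finset.union_subset hs1 hs2) hs3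
      have hcard3' : (D₁.1 ∪ D₂.1 ∪ D₃.1).card = 3 := hcard3
      rw [hp₃]
      exact hL.2.2 R hR hR4 D₁ hD₁ D₂ hD₂ D₃ hD₃ hD12 hD13 hD23 hsub hcard3'
        (hp₁ ▸ hψ₁) (hp₂ ▸ hψ₂)
  · intro hU
    refine ⟨?_, ?_, ?_⟩
    · -- L1
      intro R hR hR4 D₁ hD₁ D₂ hD₂ D₃ hD₃ hun hint
      obtain ⟨hd12, hd13, hd23⟩ := dividers_ne hR4 (hcard2 D₁ hD₁) (hcard2 D₂ hD₂)
        (hcard2 D₃ hD₃) hun hint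
      have hs1 : D₁.1 ⊆ R := hun ▸ (Finset.subset_union_left.trans Finset.subset_union_left)
      have hs2 : D₂.1 ⊆ R := hun ▸ (Finset.subset_union_right.trans Finset.subset_union_left)
      have hs3 : D₃.1 ⊆ R := hun ▸ Finset.subset_union_right
      obtain ⟨hm₁, hxi₁, hp₁⟩ := synth hX hD₁ hR hR4 hs1
      obtain ⟨hm₂, hxi₂, hp₂⟩ := synth hX hD₂ hR hR4 hs2
      obtain ⟨hm₃, hxi₃, hp₃⟩ := synth hX hD₃ hR hR4 hs3
      have he12 : mkE D₁ (R \ D₁.1) ≠ mkE D₂ (R \ D₂.1) := fun h =>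
        hd12 (by simpa [mkE] using congrArg Prod.fst h)
      have he13 : mkE D₁ (R \ D₁.1) ≠ mkE D₃ (R \ D₃.1) := fun h =>
        hd13 (by simpa [mkE] using congrArg Prod.fst h)
      have he23 : mkE D₂ (R \ D₂.1) ≠ mkE D₃ (R \ D₃.1) := fun h =>
        hd23 (by simpa [mkE] using congrArg Prod.fst h)
      have := hU.1 R hR hR4 _ hm₁ _ hm₂ _ hm₃ he12 he13 he23 hxi₁ hxi₂ hxi₃ hint
      rw [hp₁, hp₂, hp₃] at this
      exact this
    · -- L2
      intro R hR hR4 D₁ hD₁ D₂ hD₂ D₃ hD₃ hun hint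
      obtain ⟨hd12, hd13, hd23⟩ := dividers_ne hR4 (hcard2 D₁ hD₁) (hcard2 D₂ hD₂)
        (hcard2 D₃ hD₃) hun hint
      have hs1 : D₁.1 ⊆ R := hun ▸ (Finset.subset_union_left.trans Finset.subset_union_left)
      have hs2 : D₂.1 ⊆ R := hun ▸ (Finset.subset_union_right.trans Finset.subset_union_left)
      have hs3 : D₃.1 ⊆ R := hun ▸ Finset.subset_union_right
      obtain ⟨hm₁, hxi₁, hp₁⟩ := synth hX hD₁ hR hR4 hs1
      obtain ⟨hm₂, hxi₂, hp₂⟩ := synth hX hD₂ hR hR4 hs2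
      obtain ⟨hm₃, hxi₃, hp₃⟩ := synth hX hD₃ hR hR4 hs3
      have he12 : mkE D₁ (R \ D₁.1) ≠ mkE D₂ (R \ D₂.1) := fun h =>
        hd12 (by simpa [mkE] using congrArg Prod.fst h)
      have he13 : mkE D₁ (R \ D₁.1) ≠ mkE D₃ (R \ D₃.1) := fun h =>
        hd13 (by simpa [mkE] using congrArg Prod.fst h)
      have he23 : mkE D₂ (R \ D₂.1) ≠ mkE D₃ (R \ D₃.1) := fun h =>
        hd23 (by simpa [mkE] using congrArg Prod.fst h)
      have := hU.2.1 R hR hR4 _ hm₁ _ hm₂ _ hm₃ he12 he13 he23 hxi₁ hxi₂ hxi₃ hint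
      rw [hp₁, hp₂, hp₃] at this
      exact this
    · -- L3
      intro R hR hR4 D₁ hD₁ D₂ hD₂ D₃ hD₃ hD12 hD13 hD23 hsub hcard3 hφ₁ hφ₂
      have hd12 : D₁.1 ≠ D₂.1 := fun h => hD12 (huniq D₁ hD₁ D₂ hD₂ h)
      have hd13 : D₁.1 ≠ D₃.1 := fun h => hD13 (huniq D₁ hD₁ D₃ hD₃ h)
      have hd23 : D₂.1 ≠ D₃.1 := fun h => hD23 (huniq D₂ hD₂ D₃ hD₃ h)
      have hs1 : D₁.1 ⊆ R :=
        (Finset.subset_union_left.trans Finset.subset_union_left).trans hsub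
      have hs2 : D₂.1 ⊆ R :=
        (Finset.subset_union_right.trans Finset.subset_union_left).trans hsub
      have hs3 : D₃.1 ⊆ R := Finset.subset_union_right.trans hsub
      obtain ⟨hm₁, hxi₁, hp₁⟩ := synth hX hD₁ hR hR4 hs1
      obtain ⟨hm₂, hxi₂, hp₂⟩ := synth hX hD₂ hR hR4 hs2
      obtain ⟨hm₃, hxi₃, hp₃⟩ := synth hX hD₃ hR hR4 hs3
      have he12 : mkE D₁ (R \ D₁.1) ≠ mkE D₂ (R \ D₂.1) := fun h =>
        hd12 (by simpa [mkE] using congrArg Prod.fst h)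
      have he13 : mkE D₁ (R \ D₁.1) ≠ mkE D₃ (R \ D₃.1) := fun h =>
        hd13 (by simpa [mkE] using congrArg Prod.fst h)
      have he23 : mkE D₂ (R \ D₂.1) ≠ mkE D₃ (R \ D₃.1) := fun h =>
        hd23 (by simpa [mkE] using congrArg Prod.fst h)
      have := hU.2.2 R hR hR4 _ hm₁ _ hm₂ _ hm₃ he12 he13 he23 hxi₁ hxi₂ hxi₃
        hcard3 (hp₁ ▸ hφ₁) (hp₂ ▸ hφ₂)
      rw [hp₃] at this
      exact this
end
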